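/- arXiv:1803.11472 — 6 statements merged into one kernel-verified Lean document; each statement's English description precedes it below -/
import Mathlib

section
/- Let T be a measure-preserving map of a probability space (X, μ), f : X → ℝ measurable, and (B_n) positive reals with B_n → ∞ such that S_n f / B_n converges in distribution to a non-degenerate Z (Z not a.s. 0). Then there exists a constant C such that B_{2n} ≤ C · B_n for all large n. -/
open MeasureTheory Filter

/-- The bounded continuous function `z ↦ min |z| 1`. -/
noncomputable def gB : BoundedContinuousFunction ℝ ℝ :=
  BoundedContinuousFunction.mkOfBound
    ⟨fun z => min |z| 1, by fun_prop⟩ 1 (by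
      intro x y
      have h1 : ∀ z : ℝ, 0 ≤ min |z| 1 := fun z => le_min (abs_nonneg z) zero_le_one
      have h2 : ∀ z : ℝ, min |z| 1 ≤ 1 := fun z => min_le_right _ _
      simp only [ContinuousMap.coe_mk]
      rw [Real.dist_eq, abs_sub_le_iff]
      exact ⟨by linarith [h1 y, h2 x], by linarith [h1 x, h2 y]⟩)

@[simp] lemma gB_apply (z : ℝ) : gB z = min |z| 1 := rfl

/-- The bounded continuous function `z ↦ min 1 (max (|z| - M) 0)`. -/
noncomputable def hB (M : ℕ) : BoundedContinuousFunction ℝ ℝ :=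
  BoundedContinuousFunction.mkOfBound
    ⟨fun z => min 1 (max (|z| - M) 0), by fun_prop⟩ 1 (by
      intro x y
      have h1 : ∀ z : ℝ, 0 ≤ min 1 (max (|z| - (M : ℝ)) 0) :=
        fun z => le_min zero_le_one (le_max_right _ _)
      have h2 : ∀ z : ℝ, min 1 (max (|z| - (M : ℝ)) 0) ≤ 1 := fun z => min_le_left _ _
      simp only [ContinuousMap.coe_mk]
      rw [Real.dist_eq, abs_sub_le_iff]
      exact ⟨by linarith [h1 y, h2 x], by linarith [h1 x, h2 y]⟩)

@[simp] lemma hB_apply (M : ℕ) (z : ℝ) : hB M z = min 1 (max (|z| - M) 0) := rfl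

lemma hB_nonneg (M : ℕ) (z : ℝ) : 0 ≤ hB M z :=
  le_min zero_le_one (le_max_right _ _)

lemma hB_le_one (M : ℕ) (z : ℝ) : hB M z ≤ 1 := min_le_left _ _

lemma hB_eq_one (M : ℕ) (z : ℝ) (h : (M : ℝ) + 1 ≤ |z|) : hB M z = 1 := by
  simp only [hB_apply]
  rw [min_eq_left]
  rw [le_max_iff]
  left; linarith

lemma hB_eq_zero (M : ℕ) (z : ℝ) (h : |z| ≤ M) : hB M z = 0 := by
  simp only [hB_apply]
  rw [max_eq_right (by linarith), min_eq_right zero_le_one]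

/-- If `T` preserves a probability measure `μ` and `S_n f / B_n` converges in
distribution to a limit which is not a.s. `0`, then `B_{2n} ≤ C B_n` for large `n`. -/
theorem stmt1 {X : Type*} [MeasurableSpace X] (μ : Measure X) [IsProbabilityMeasure μ]
    (T : X → X) (hT : MeasurePreserving T μ μ)
    (f : X → ℝ) (hf : Measurable f)
    (B : ℕ → ℝ) (hBpos : ∀ n, 0 < B n) (hBtop : Tendsto B atTop atTop)
    (ν : Measure ℝ) [IsProbabilityMeasure ν] (hν : ν {0} < 1)
    (hconv : ∀ g : BoundedContinuousFunction ℝ ℝ,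
      Tendsto (fun n => ∫ x, g ((∑ k ∈ Finset.range n, f (T^[k] x)) / B n) ∂μ)
        atTop (nhds (∫ z, g z ∂ν))) :
    ∃ C : ℝ, ∀ᶠ n in atTop, B (2 * n) ≤ C * B n := by
  -- notation: W n x = S_n f x / B n
  have hWmeas : ∀ n, Measurable (fun x => (∑ k ∈ Finset.range n, f (T^[k] x)) / B n) := by
    intro n
    exact (Finset.measurable_sum _ fun k _ => hf.comp (hT.measurable.iterate k)).div_const _
  -- integrability of bounded continuous compositions
  have hint : ∀ (φ : BoundedContinuousFunction ℝ ℝ) (w : X → ℝ), Measurable w →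
      Integrable (fun x => φ (w x)) μ := by
    intro φ w hw
    refine (integrable_const ‖φ‖).mono'
      ((φ.continuous.measurable.comp hw).aestronglyMeasurable) ?_
    filter_upwards with x
    exact φ.norm_coe_le_norm _
  -- c := ∫ gB dν > 0
  set c : ℝ := ∫ z, gB z ∂ν with hc
  have hcpos : 0 < c := by
    rw [hc]
    refine (integral_pos_iff_support_of_nonneg (f := fun z => gB z)
      (fun z => le_min (abs_nonneg z) zero_le_one) (gB.integrable ν)).mpr ?_
    have hsupp : Function.support (fun z : ℝ => gB z) = {(0 : ℝ)}ᶜ := by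
      ext z
      simp only [Function.mem_support, gB_apply, Set.mem_compl_iff, Set.mem_singleton_iff]
      constructor
      · intro h hz; subst hz; simp at h
      · intro hz h
        rcases min_eq_iff.mp h with ⟨h1, _⟩ | ⟨h1, _⟩
        · exact hz (abs_eq_zero.mp h1)
        · norm_num at h1
    rw [hsupp, prob_compl_eq_one_sub (measurableSet_singleton 0)]
    exact tsub_pos_iff_lt.mpr hν
  -- choose M₀ with ∫ hB M₀ dν < c/16, by dominated convergence
  have hDCT : Tendsto (fun M : ℕ => ∫ z, hB M z ∂ν) atTop (nhds 0) := by
    have h0 : (0 : ℝ) = ∫ z : ℝ, (0 : ℝ) ∂ν := by simp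
    rw [h0]
    refine tendsto_integral_of_dominated_convergence (fun _ => (1 : ℝ))
      (fun M => ((hB M).continuous.measurable).aestronglyMeasurable)
      (integrable_const 1) (fun M => ?_) ?_
    · filter_upwards with z
      rw [Real.norm_eq_abs, abs_of_nonneg (hB_nonneg M z)]
      exact hB_le_one M z
    · filter_upwards with z
      refine Tendsto.congr' ?_ tendsto_const_nhds
      filter_upwards [eventually_ge_atTop ⌈|z|⌉₊] with M hM
      exact (hB_eq_zero M z (le_trans (Nat.le_ceil _) (by exact_mod_cast hM))).symm
  obtain ⟨M₀, hM₀⟩ : ∃ M₀ : ℕ, ∫ z, hB M₀ z ∂ν < c / 16 :=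
    (hDCT.eventually_lt_const (by linarith)).exists
  set M : ℝ := (M₀ : ℝ) + 1 with hM
  have hMpos : 0 < M := by positivity
  refine ⟨4 * M / c, ?_⟩
  by_contra hcon
  rw [Filter.not_eventually] at hcon
  -- eventual facts
  have ev1 : ∀ᶠ n in atTop, ∫ x, hB M₀ ((∑ k ∈ Finset.range n, f (T^[k] x)) / B n) ∂μ < c / 8 :=
    (hconv (hB M₀)).eventually_lt_const (by linarith)
  have hconv2 : Tendsto (fun n => ∫ x, gB ((∑ k ∈ Finset.range (2 * n), f (T^[k] x)) / B (2 * n)) ∂μ)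
      atTop (nhds c) :=
    (hconv gB).comp (tendsto_atTop_mono (fun n => by simp only [id]; omega) tendsto_id)
  have ev2 : ∀ᶠ n in atTop,
      3 * c / 4 < ∫ x, gB ((∑ k ∈ Finset.range (2 * n), f (T^[k] x)) / B (2 * n)) ∂μ :=
    hconv2.eventually_const_lt (by linarith)
  obtain ⟨n, hn1, hn2, hn3⟩ := (hcon.and_eventually (ev1.and ev2)).exists
  push_neg at hn1
  -- the set where |W n| is large, and its preimage under T^[n]
  set s1 : Set X := {x | M ≤ |(∑ k ∈ Finset.range n, f (T^[k] x)) / B n|} with hs1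
  have hs1meas : MeasurableSet s1 :=
    measurableSet_le measurable_const (hWmeas n).abs
  have hμs1 : (μ s1).toReal ≤ c / 8 := by
    have hind : ∀ x, s1.indicator (fun _ => (1 : ℝ)) x ≤
        hB M₀ ((∑ k ∈ Finset.range n, f (T^[k] x)) / B n) := by
      intro x
      by_cases hx : x ∈ s1
      · rw [Set.indicator_of_mem hx]
        exact (hB_eq_one M₀ _ hx).ge
      · rw [Set.indicator_of_notMem hx]
        exact hB_nonneg _ _
    have := integral_mono ((integrable_const (1 : ℝ)).indicator hs1meas)
      (hint (hB M₀) _ (hWmeas n)) hind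
    rw [show (fun x => s1.indicator (fun _ => (1:ℝ)) x) = s1.indicator 1 from rfl] at this
    rw [integral_indicator_one hs1meas] at this
    rw [measureReal_def] at this
    linarith
  set s2 : Set X := T^[n] ⁻¹' s1 with hs2
  have hμs2 : μ s2 = μ s1 := (hT.iterate n).measure_preimage hs1meas.nullMeasurableSet
  -- pointwise bound for gB (W (2n) x)
  have hkey : ∀ x, gB ((∑ k ∈ Finset.range (2 * n), f (T^[k] x)) / B (2 * n)) ≤
      (s1 ∪ s2).indicator (fun _ => (1 : ℝ)) x + c / 2 := by
    intro x
    by_cases hx : x ∈ s1 ∪ s2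
    · rw [Set.indicator_of_mem hx]
      have : gB ((∑ k ∈ Finset.range (2 * n), f (T^[k] x)) / B (2 * n)) ≤ 1 :=
        min_le_right _ _
      linarith
    · rw [Set.indicator_of_notMem hx]
      rw [Set.mem_union, not_or] at hx
      obtain ⟨hx1, hx2⟩ := hx
      simp only [hs1, hs2, Set.mem_preimage, Set.mem_setOf_eq, not_le] at hx1 hx2
      set a : ℝ := (∑ k ∈ Finset.range n, f (T^[k] x)) / B n with ha
      set b : ℝ := (∑ k ∈ Finset.range n, f (T^[k] (T^[n] x))) / B n with hb
      have hsum : ∑ k ∈ Finset.range (2 * n), f (T^[k] x)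
          = a * B n + b * B n := by
        rw [two_mul, Finset.sum_range_add, ha, hb,
          div_mul_cancel₀ _ (hBpos n).ne', div_mul_cancel₀ _ (hBpos n).ne']
        congr 1
        refine Finset.sum_congr rfl fun i _ => ?_
        rw [← Function.iterate_add_apply, add_comm]
      have habs : |(∑ k ∈ Finset.range (2 * n), f (T^[k] x)) / B (2 * n)| ≤
          (|a| + |b|) * (B n / B (2 * n)) := by
        rw [hsum]
        have hd : 0 < B n / B (2 * n) := div_pos (hBpos n) (hBpos (2 * n))
        have he : (a * B n + b * B n) / B (2 * n) = (a + b) * (B n / B (2 * n)) := by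
          field_simp
        rw [he, abs_mul, abs_of_pos hd]
        exact mul_le_mul_of_nonneg_right (abs_add_le a b) hd.le
      have hgle : gB ((∑ k ∈ Finset.range (2 * n), f (T^[k] x)) / B (2 * n)) ≤
          |(∑ k ∈ Finset.range (2 * n), f (T^[k] x)) / B (2 * n)| := min_le_left _ _
      have hr : B n / B (2 * n) ≤ c / (4 * M) := by
        rw [div_le_div_iff₀ (hBpos (2 * n)) (by positivity)]
        have := hBpos n
        have h1 : 4 * M / c * B n < B (2 * n) := hn1
        rw [div_mul_eq_mul_div, div_lt_iff₀ hcpos] at h1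
        nlinarith
      have hfin : (|a| + |b|) * (B n / B (2 * n)) ≤ c / 2 := by
        have h1 : (|a| + |b|) * (B n / B (2 * n)) ≤ (M + M) * (B n / B (2 * n)) := by
          have := hBpos n
          have := hBpos (2 * n)
          have hd : 0 ≤ B n / B (2 * n) := by positivity
          nlinarith
        have h2 : (M + M) * (B n / B (2 * n)) ≤ (M + M) * (c / (4 * M)) := by
          apply mul_le_mul_of_nonneg_left hr (by linarith)
        have h3 : (M + M) * (c / (4 * M)) = c / 2 := by
          field_simp
          ring
        linarith
      linarith
  -- integrate the pointwise bound
  have hAmeas : MeasurableSet (s1 ∪ s2) :=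
    hs1meas.union (hs1meas.preimage (hT.measurable.iterate n))
  have hrhsint : Integrable (fun x => (s1 ∪ s2).indicator (fun _ => (1 : ℝ)) x + c / 2) μ :=
    ((integrable_const (1 : ℝ)).indicator hAmeas).add (integrable_const _)
  have hintle := integral_mono (hint gB _ (hWmeas (2 * n))) hrhsint hkey
  have heq : ∫ x, ((s1 ∪ s2).indicator (fun _ => (1 : ℝ)) x + c / 2) ∂μ
      = (μ (s1 ∪ s2)).toReal + c / 2 := by
    rw [integral_add ((integrable_const (1 : ℝ)).indicator hAmeas) (integrable_const _),
      integral_const]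
    simp only [measure_univ, probReal_univ, ENNReal.toReal_one, smul_eq_mul, one_mul]
    congr 1
    exact integral_indicator_one hAmeas
  rw [heq] at hintle
  have hA : (μ (s1 ∪ s2)).toReal ≤ c / 8 + c / 8 := by
    have h1 : μ (s1 ∪ s2) ≤ μ s1 + μ s2 := measure_union_le _ _
    have h2 : (μ (s1 ∪ s2)).toReal ≤ (μ s1 + μ s2).toReal := by
      apply ENNReal.toReal_mono _ h1
      exact ENNReal.add_ne_top.mpr ⟨measure_ne_top _ _, measure_ne_top _ _⟩
    rw [ENNReal.toReal_add (measure_ne_top _ _) (measure_ne_top _ _), hμs2] at h2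
    linarith
  linarith
end

section
/- Let T be a measure-preserving map of a probability space (X, μ), f : X → ℝ measurable, and (B_n) positive reals with B_n → ∞ such that S_n f / B_n converges in distribution to a random variable Z that is not a.s. 0. Then B_n grows at most polynomially: there exist constants C, D > 0 such that B_n ≤ D · n^C for all n ≥ 1. -/
open MeasureTheory Filter


noncomputable def trap (a b : ℝ) : BoundedContinuousFunction ℝ ℝ :=
  BoundedContinuousFunction.mkOfBound
    ⟨fun x => min 1 (max 0 ((|x| - a) / (b - a))),
      continuous_const.min (continuous_const.max
        ((continuous_abs.sub continuous_const).div_const _))⟩ 1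
    (by
      intro x y
      simp only [ContinuousMap.coe_mk, Real.dist_eq]
      have h1 : ∀ z : ℝ, 0 ≤ min 1 (max 0 z) :=
        fun z => le_min zero_le_one (le_max_left 0 z)
      have h2 : ∀ z : ℝ, min 1 (max 0 z) ≤ 1 := fun z => min_le_left _ _
      rw [abs_sub_le_iff]
      constructor <;> nlinarith [h1 ((|x| - a) / (b - a)), h2 ((|x| - a) / (b - a)),
        h1 ((|y| - a) / (b - a)), h2 ((|y| - a) / (b - a))])

lemma trap_apply (a b x : ℝ) : trap a b x = min 1 (max 0 ((|x| - a) / (b - a))) := rfl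

lemma trap_nonneg (a b x : ℝ) : 0 ≤ trap a b x :=
  le_min zero_le_one (le_max_left 0 _)

lemma trap_le_one (a b x : ℝ) : trap a b x ≤ 1 := min_le_left _ _

lemma trap_eq_zero {a b x : ℝ} (hab : a < b) (h : |x| ≤ a) : trap a b x = 0 := by
  have h0 : (|x| - a) / (b - a) ≤ 0 :=
    div_nonpos_of_nonpos_of_nonneg (by linarith) (by linarith)
  rw [trap_apply, max_eq_left h0, min_eq_right zero_le_one]

lemma trap_eq_one {a b x : ℝ} (hab : a < b) (h : b ≤ |x|) : trap a b x = 1 := by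
  have hba : 0 < b - a := by linarith
  have h1 : (1:ℝ) ≤ (|x| - a) / (b - a) := by
    rw [le_div_iff₀ hba]; linarith
  rw [trap_apply, max_eq_right (by linarith), min_eq_left h1]

lemma trap_integrable {α : Type*} [MeasurableSpace α] (ρ : Measure α) [IsProbabilityMeasure ρ]
    {Y : α → ℝ} (hY : Measurable Y) (a b : ℝ) : Integrable (fun x => trap a b (Y x)) ρ := by
  refine Integrable.mono' (integrable_const 1) ?_ ?_
  · exact ((trap a b).continuous.measurable.comp hY).aestronglyMeasurable
  · filter_upwards with x
    rw [Real.norm_eq_abs, abs_of_nonneg (trap_nonneg a b _)]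
    exact trap_le_one a b _

lemma int_trap_le {α : Type*} [MeasurableSpace α] (ρ : Measure α) [IsProbabilityMeasure ρ]
    {Y : α → ℝ} (hY : Measurable Y) {a b : ℝ} (hab : a < b) :
    ∫ x, trap a b (Y x) ∂ρ ≤ (ρ {x | a ≤ |Y x|}).toReal := by
  have hs : MeasurableSet {x | a ≤ |Y x|} := measurableSet_le measurable_const hY.abs
  have h1 : ∫ x, trap a b (Y x) ∂ρ ≤ ∫ x, ({x | a ≤ |Y x|}).indicator (fun _ => (1:ℝ)) x ∂ρ := by
    refine integral_mono (trap_integrable ρ hY a b) ((integrable_const 1).indicator hs) ?_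
    intro x
    by_cases h : a ≤ |Y x|
    · have hx : x ∈ {x | a ≤ |Y x|} := h
      rw [Set.indicator_of_mem hx]
      exact trap_le_one a b _
    · have hx : x ∉ {x | a ≤ |Y x|} := h
      show trap a b (Y x) ≤ _
      rw [Set.indicator_of_notMem hx, trap_eq_zero hab (le_of_not_ge h)]
  rw [integral_indicator_const (1:ℝ) hs] at h1
  have h2 : ∫ x, trap a b (Y x) ∂ρ ≤ ρ.real {x | a ≤ |Y x|} := by simpa using h1
  exact h2

lemma meas_le_int_trap {α : Type*} [MeasurableSpace α] (ρ : Measure α) [IsProbabilityMeasure ρ]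
    {Y : α → ℝ} (hY : Measurable Y) {a b : ℝ} (hab : a < b) :
    (ρ {x | b ≤ |Y x|}).toReal ≤ ∫ x, trap a b (Y x) ∂ρ := by
  have hs : MeasurableSet {x | b ≤ |Y x|} := measurableSet_le measurable_const hY.abs
  have h1 : ∫ x, ({x | b ≤ |Y x|}).indicator (fun _ => (1:ℝ)) x ∂ρ ≤ ∫ x, trap a b (Y x) ∂ρ := by
    refine integral_mono ((integrable_const 1).indicator hs) (trap_integrable ρ hY a b) ?_
    intro x
    by_cases h : b ≤ |Y x|
    · have hx : x ∈ {x | b ≤ |Y x|} := h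
      show _ ≤ trap a b (Y x)
      rw [Set.indicator_of_mem hx, trap_eq_one hab h]
    · have hx : x ∉ {x | b ≤ |Y x|} := h
      rw [Set.indicator_of_notMem hx]
      exact trap_nonneg a b _
  rw [integral_indicator_const (1:ℝ) hs] at h1
  have h2 : ρ.real {x | b ≤ |Y x|} ≤ ∫ x, trap a b (Y x) ∂ρ := by simpa using h1
  exact h2

lemma vanish {α : Type*} [MeasurableSpace α] (ρ : Measure α) [IsFiniteMeasure ρ]
    {Y : α → ℝ} (hY : Measurable Y) :
    Tendsto (fun c : ℕ => ρ {x | (c:ℝ) ≤ |Y x|}) atTop (nhds 0) := by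
  have hs : ∀ c : ℕ, NullMeasurableSet {x | (c:ℝ) ≤ |Y x|} ρ :=
    fun c => (measurableSet_le measurable_const hY.abs).nullMeasurableSet
  have hanti : Antitone (fun c : ℕ => {x | (c:ℝ) ≤ |Y x|}) := by
    intro c d hcd x hx
    exact le_trans ((Nat.cast_le (α := ℝ)).mpr hcd) hx
  have hempty : (⋂ c : ℕ, {x | (c:ℝ) ≤ |Y x|}) = ∅ := by
    ext x
    simp only [Set.mem_iInter, Set.mem_setOf_eq, Set.mem_empty_iff_false, iff_false, not_forall]
    obtain ⟨c, hc⟩ := exists_nat_gt |Y x|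
    exact ⟨c, not_le.mpr hc⟩
  have h := MeasureTheory.tendsto_measure_iInter_atTop hs hanti ⟨0, measure_ne_top ρ _⟩
  rwa [hempty, measure_empty] at h

theorem aux {X : Type*} [MeasurableSpace X] (μ : Measure X) [IsProbabilityMeasure μ]
    (S : ℕ → X → ℝ) (hSmeas : ∀ n, Measurable (S n))
    (Tn : ℕ → X → X) (hTn : ∀ n, MeasurePreserving (Tn n) μ μ)
    (hSadd : ∀ n m x, S (n + m) x = S n x + S m (Tn n x))
    (B : ℕ → ℝ) (hBpos : ∀ n, 0 < B n)
    (ν : Measure ℝ) [IsProbabilityMeasure ν] (hν : ν {0} < 1)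
    (hconv : ∀ g : BoundedContinuousFunction ℝ ℝ,
      Tendsto (fun n => ∫ x, g (S n x / B n) ∂μ) atTop (nhds (∫ z, g z ∂ν))) :
    ∃ C D : ℝ, 0 < C ∧ 0 < D ∧ ∀ n : ℕ, 1 ≤ n → B n ≤ D * (n : ℝ) ^ C := by
  -- Step 1: non-degeneracy of ν gives ε
  have hex : ∃ c₀ : ℕ, ν {z : ℝ | (1:ℝ)/(c₀+1) ≤ |z|} ≠ 0 := by
    by_contra h
    push_neg at h
    have hcompl : 0 < ν ({0}ᶜ) := by
      rw [prob_compl_eq_one_sub (MeasurableSet.singleton (0:ℝ))]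
      exact tsub_pos_iff_lt.mpr hν
    have hz : ν ({0}ᶜ) = 0 := by
      have hsub : ({0}ᶜ : Set ℝ) ⊆ ⋃ c : ℕ, {z : ℝ | (1:ℝ)/(c+1) ≤ |z|} := by
        intro z hz
        obtain ⟨c, hc⟩ := exists_nat_one_div_lt (abs_pos.mpr hz)
        exact Set.mem_iUnion.mpr ⟨c, le_of_lt hc⟩
      exact measure_mono_null hsub (measure_iUnion_null fun c => h c)
    exact absurd hz (ne_of_gt hcompl)
  obtain ⟨c₀, hc₀⟩ := hex
  set ε : ℝ := 1/(2*((c₀:ℝ)+1)) with hεdef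
  have hc₀pos : (0:ℝ) < (c₀:ℝ) + 1 := by positivity
  have hε : 0 < ε := by positivity
  have h2ε : 2*ε = 1/((c₀:ℝ)+1) := by rw [hεdef]; field_simp
  have hεlt : ε < 2*ε := by linarith
  -- Step 2: δ and eventual lower bound H2
  set I : ℝ := ∫ z, trap ε (2*ε) z ∂ν with hIdef
  have hIpos : 0 < I := by
    have h1 : (ν {z : ℝ | 2*ε ≤ |z|}).toReal ≤ I := by
      have := meas_le_int_trap ν measurable_id (hab := hεlt)
      simpa using this
    have h2 : 0 < (ν {z : ℝ | 2*ε ≤ |z|}).toReal := by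
      refine ENNReal.toReal_pos ?_ (measure_ne_top ν _)
      rw [h2ε]
      exact hc₀
    linarith
  set δ : ℝ := I/2 with hδdef
  have hδpos : 0 < δ := by positivity
  have H2 : ∀ᶠ n in atTop, δ < (μ {x | ε * B n ≤ |S n x|}).toReal := by
    have h1 : ∀ᶠ n in atTop, δ < ∫ x, trap ε (2*ε) (S n x / B n) ∂μ :=
      (hconv (trap ε (2*ε))).eventually_const_lt (by rw [hδdef]; linarith)
    filter_upwards [h1] with n hn
    have h2 : ∫ x, trap ε (2*ε) (S n x / B n) ∂μ
        ≤ (μ {x | ε ≤ |S n x / B n|}).toReal :=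
      int_trap_le μ ((hSmeas n).div_const _) hεlt
    have hset : {x | ε ≤ |S n x / B n|} = {x | ε * B n ≤ |S n x|} := by
      ext x
      simp only [Set.mem_setOf_eq, abs_div, abs_of_pos (hBpos n)]
      rw [le_div_iff₀ (hBpos n)]
    rw [hset] at h2
    linarith
  obtain ⟨N₂, hN₂⟩ := eventually_atTop.mp H2
  -- Step 3: uniform tail bound H1 with constant M
  obtain ⟨m₀, hm₀⟩ : ∃ m₀ : ℕ, (ν {z : ℝ | (m₀:ℝ) ≤ |z|}).toReal < δ/2 := by
    have h1 := (vanish ν measurable_id).eventually_lt_const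
      (ENNReal.ofReal_pos.mpr (by positivity : (0:ℝ) < δ/2))
    obtain ⟨m₀, hm₀⟩ := h1.exists
    refine ⟨m₀, ?_⟩
    have := ENNReal.toReal_lt_of_lt_ofReal hm₀
    simpa using this
  have hm₀lt : (m₀:ℝ) < (m₀:ℝ) + 1 := by linarith
  have hIg1 : ∫ z, trap (m₀:ℝ) ((m₀:ℝ)+1) z ∂ν < δ/2 := by
    have := int_trap_le ν measurable_id (hab := hm₀lt)
    simp only [id] at this
    linarith [this]
  have H1a : ∀ᶠ n in atTop, (μ {x | ((m₀:ℝ)+1) * B n ≤ |S n x|}).toReal < δ/2 := by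
    have h1 : ∀ᶠ n in atTop,
        (∫ x, trap (m₀:ℝ) ((m₀:ℝ)+1) (S n x / B n) ∂μ) < δ/2 :=
      (hconv (trap (m₀:ℝ) ((m₀:ℝ)+1))).eventually_lt_const hIg1
    filter_upwards [h1] with n hn
    have h2 : (μ {x | ((m₀:ℝ)+1) ≤ |S n x / B n|}).toReal
        ≤ ∫ x, trap (m₀:ℝ) ((m₀:ℝ)+1) (S n x / B n) ∂μ :=
      meas_le_int_trap μ ((hSmeas n).div_const _) hm₀lt
    have hset : {x | ((m₀:ℝ)+1) ≤ |S n x / B n|} = {x | ((m₀:ℝ)+1) * B n ≤ |S n x|} := by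
      ext x
      simp only [Set.mem_setOf_eq, abs_div, abs_of_pos (hBpos n)]
      rw [le_div_iff₀ (hBpos n)]
    rw [hset] at h2
    linarith
  obtain ⟨N₁, hN₁⟩ := eventually_atTop.mp H1a
  have hcn : ∀ n : ℕ, ∃ c : ℕ, (μ {x | (c:ℝ) ≤ |S n x|}).toReal < δ/2 := by
    intro n
    have h1 := (vanish μ (hSmeas n)).eventually_lt_const
      (ENNReal.ofReal_pos.mpr (by positivity : (0:ℝ) < δ/2))
    obtain ⟨c, hc⟩ := h1.exists
    exact ⟨c, by simpa using ENNReal.toReal_lt_of_lt_ofReal hc⟩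
  choose cfun hcfun using hcn
  set M : ℝ := ((m₀:ℝ)+1) + ∑ k ∈ Finset.range N₁, (cfun k : ℝ) / B k with hMdef
  have hsumnn : (0:ℝ) ≤ ∑ k ∈ Finset.range N₁, (cfun k : ℝ) / B k :=
    Finset.sum_nonneg fun k _ => div_nonneg (Nat.cast_nonneg _) (hBpos k).le
  have hM0 : 0 < M := by
    rw [hMdef]; positivity
  have hMm₀ : (m₀:ℝ) + 1 ≤ M := by rw [hMdef]; linarith
  have H1 : ∀ n, (μ {x | M * B n ≤ |S n x|}).toReal < δ/2 := by
    intro n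
    rcases lt_or_ge n N₁ with h | h
    · have hterm : (cfun n : ℝ) / B n ≤ ∑ k ∈ Finset.range N₁, (cfun k : ℝ) / B k :=
        Finset.single_le_sum (f := fun k => (cfun k : ℝ) / B k)
          (fun k _ => div_nonneg (Nat.cast_nonneg _) (hBpos k).le)
          (Finset.mem_range.mpr h)
      have hMc : (cfun n : ℝ) ≤ M * B n := by
        have h1 : (cfun n : ℝ) / B n ≤ M := by rw [hMdef]; have := Nat.cast_nonneg (α := ℝ) m₀; linarith
        calc (cfun n : ℝ) = ((cfun n : ℝ) / B n) * B n :=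
            (div_mul_cancel₀ _ (hBpos n).ne').symm
          _ ≤ M * B n := mul_le_mul_of_nonneg_right h1 (hBpos n).le
      have hsub : {x | M * B n ≤ |S n x|} ⊆ {x | (cfun n : ℝ) ≤ |S n x|} :=
        fun x hx => le_trans hMc hx
      have := ENNReal.toReal_mono (measure_ne_top μ _) (measure_mono hsub)
      linarith [hcfun n]
    · have hMc : ((m₀:ℝ)+1) * B n ≤ M * B n :=
        mul_le_mul_of_nonneg_right hMm₀ (hBpos n).le
      have hsub : {x | M * B n ≤ |S n x|} ⊆ {x | ((m₀:ℝ)+1) * B n ≤ |S n x|} :=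
        fun x hx => le_trans hMc hx
      have := ENNReal.toReal_mono (measure_ne_top μ _) (measure_mono hsub)
      linarith [hN₁ n h]
  -- Step 4: key subadditivity estimate
  have key : ∀ a b : ℕ, N₂ ≤ a + b → B (a + b) ≤ (2*M/ε) * max (B a) (B b) := by
    intro a b hab2
    by_contra hcon
    push_neg at hcon
    have ht : 2*M*max (B a) (B b) < ε * B (a+b) := by
      rw [div_mul_eq_mul_div, div_lt_iff₀ hε] at hcon
      nlinarith
    have hsub : {x | ε * B (a+b) ≤ |S (a+b) x|}
        ⊆ {x | M * B a ≤ |S a x|} ∪ {x | M * B b ≤ |S b (Tn a x)|} := by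
      intro x hx
      simp only [Set.mem_setOf_eq] at hx
      by_contra hx'
      simp only [Set.mem_union, Set.mem_setOf_eq, not_or, not_le] at hx'
      have habs : |S (a+b) x| ≤ |S a x| + |S b (Tn a x)| := by
        rw [hSadd a b x]; exact abs_add_le _ _
      have h1 : M * B a ≤ M * max (B a) (B b) :=
        mul_le_mul_of_nonneg_left (le_max_left _ _) hM0.le
      have h2 : M * B b ≤ M * max (B a) (B b) :=
        mul_le_mul_of_nonneg_left (le_max_right _ _) hM0.le
      linarith [hx'.1, hx'.2]
    have hμ2 : μ {x | M * B b ≤ |S b (Tn a x)|} = μ {x | M * B b ≤ |S b x|} := by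
      have heq : {x | M * B b ≤ |S b (Tn a x)|} = Tn a ⁻¹' {x | M * B b ≤ |S b x|} := rfl
      rw [heq, (hTn a).measure_preimage
        (measurableSet_le measurable_const (hSmeas b).abs).nullMeasurableSet]
    have h1 : (μ {x | ε * B (a+b) ≤ |S (a+b) x|}).toReal
        ≤ (μ {x | M * B a ≤ |S a x|}).toReal + (μ {x | M * B b ≤ |S b x|}).toReal := by
      have h2 := (measure_mono hsub).trans (measure_union_le (μ := μ) _ _)
      rw [hμ2] at h2
      have h3 := ENNReal.toReal_mono
        (by exact ENNReal.add_ne_top.mpr ⟨measure_ne_top μ _, measure_ne_top μ _⟩) h2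
      rwa [ENNReal.toReal_add (measure_ne_top μ _) (measure_ne_top μ _)] at h3
    have h4 := hN₂ (a+b) hab2
    linarith [H1 a, H1 b]
  -- Step 5: induction
  set K' : ℝ := max (2*M/ε) 2 with hK'def
  have hK'2 : (2:ℝ) ≤ K' := le_max_right _ _
  have hK'pos : (0:ℝ) < K' := by linarith
  set C : ℝ := Real.logb (3/2) K' with hCdef
  have hC : 0 < C := Real.logb_pos (by norm_num) (by linarith)
  have hpow : ((3:ℝ)/2) ^ C = K' := Real.rpow_logb (by norm_num) (by norm_num) hK'pos
  set N₃ : ℕ := max N₂ 3 with hN₃def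
  set D : ℝ := 1 + ∑ k ∈ Finset.range N₃, B k with hDdef
  have hD : 0 < D := by
    rw [hDdef]
    have : (0:ℝ) ≤ ∑ k ∈ Finset.range N₃, B k :=
      Finset.sum_nonneg fun k _ => (hBpos k).le
    linarith
  have hDb : ∀ k, k < N₃ → B k ≤ D := by
    intro k hk
    have := Finset.single_le_sum (f := B) (fun i _ => (hBpos i).le) (Finset.mem_range.mpr hk)
    rw [hDdef]; linarith
  refine ⟨C, D, hC, hD, ?_⟩
  intro n
  induction n using Nat.strong_induction_on with
  | _ n IH =>
    intro hn
    rcases lt_or_ge n N₃ with hsmall | hbig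
    · have h1 : (1:ℝ) ≤ (n:ℝ) ^ C := by
        calc (1:ℝ) = (1:ℝ) ^ C := (Real.one_rpow C).symm
          _ ≤ (n:ℝ) ^ C :=
            Real.rpow_le_rpow zero_le_one (by exact_mod_cast hn) hC.le
      calc B n ≤ D := hDb n hsmall
        _ = D * 1 := (mul_one D).symm
        _ ≤ D * (n:ℝ) ^ C := mul_le_mul_of_nonneg_left h1 hD.le
    · have hn3 : 3 ≤ n := le_trans (le_max_right N₂ 3) hbig
      set a : ℕ := (n+1)/2 with hadef
      set b : ℕ := n/2 with hbdef
      have hab : a + b = n := by omega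
      have ha1 : 1 ≤ a := by omega
      have hb1 : 1 ≤ b := by omega
      have haln : a < n := by omega
      have hbln : b < n := by omega
      have hba : b ≤ a := by omega
      have hkey := key a b (by rw [hab]; exact le_trans (le_max_left N₂ 3) hbig)
      rw [hab] at hkey
      have hBa := IH a haln ha1
      have hBb := IH b hbln hb1
      have hpowab : (b:ℝ) ^ C ≤ (a:ℝ) ^ C :=
        Real.rpow_le_rpow (Nat.cast_nonneg b) (Nat.cast_le.mpr hba) hC.le
      have hmax : max (B a) (B b) ≤ D * (a:ℝ) ^ C :=
        max_le hBa (hBb.trans (mul_le_mul_of_nonneg_left hpowab hD.le))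
      have hKK' : 2*M/ε ≤ K' := le_max_left _ _
      have haC : (a:ℝ) ≤ 2*(n:ℝ)/3 := by
        have h1 : (a:ℝ) ≤ ((n:ℝ)+1)/2 := by
          rw [hadef]
          have := Nat.cast_div_le (m := n+1) (n := 2) (α := ℝ)
          push_cast at this ⊢
          linarith
        have h2 : ((n:ℝ)+1)/2 ≤ 2*(n:ℝ)/3 := by
          have h3 : (3:ℝ) ≤ (n:ℝ) := by exact_mod_cast hn3
          linarith
        linarith
      have haCpow : (a:ℝ) ^ C ≤ (2*(n:ℝ)/3) ^ C :=
        Real.rpow_le_rpow (Nat.cast_nonneg a) haC hC.le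
      have heq : (2*(n:ℝ)/3) ^ C = K'⁻¹ * (n:ℝ) ^ C := by
        have h23 : (2*(n:ℝ)/3) = ((3:ℝ)/2)⁻¹ * (n:ℝ) := by ring
        rw [h23, Real.mul_rpow (by norm_num) (Nat.cast_nonneg n),
          Real.inv_rpow (by norm_num), hpow]
      have hmaxnn : (0:ℝ) ≤ max (B a) (B b) := le_trans (hBpos a).le (le_max_left _ _)
      have hrpownn : (0:ℝ) ≤ (n:ℝ) ^ C := Real.rpow_nonneg (Nat.cast_nonneg n) C
      calc B n ≤ (2*M/ε) * max (B a) (B b) := hkey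
        _ ≤ K' * (D * (a:ℝ) ^ C) :=
            mul_le_mul hKK' hmax hmaxnn hK'pos.le
        _ ≤ K' * (D * (K'⁻¹ * (n:ℝ) ^ C)) := by
            have := haCpow.trans heq.le
            exact mul_le_mul_of_nonneg_left (mul_le_mul_of_nonneg_left this hD.le) hK'pos.le
        _ = D * (n:ℝ) ^ C := by
            field_simp

/-- If `T` preserves a probability measure `μ` and `S_n f / B_n` converges in
distribution to a limit which is not a.s. `0`, then `B_n` grows at most polynomially. -/
theorem stmt2 {X : Type*} [MeasurableSpace X] (μ : Measure X) [IsProbabilityMeasure μ]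
    (T : X → X) (hT : MeasurePreserving T μ μ)
    (f : X → ℝ) (hf : Measurable f)
    (B : ℕ → ℝ) (hBpos : ∀ n, 0 < B n) (hBtop : Tendsto B atTop atTop)
    (ν : Measure ℝ) [IsProbabilityMeasure ν] (hν : ν {0} < 1)
    (hconv : ∀ g : BoundedContinuousFunction ℝ ℝ,
      Tendsto (fun n => ∫ x, g ((∑ k ∈ Finset.range n, f (T^[k] x)) / B n) ∂μ)
        atTop (nhds (∫ z, g z ∂ν))) :
    ∃ C D : ℝ, 0 < C ∧ 0 < D ∧ ∀ n : ℕ, 1 ≤ n → B n ≤ D * (n : ℝ) ^ C := by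

  refine aux μ (fun n x => ∑ k ∈ Finset.range n, f (T^[k] x))
    (fun n => Finset.measurable_sum _ fun k _ => hf.comp (hT.measurable.iterate k))
    (fun n => T^[n]) (fun n => hT.iterate n) ?_ B hBpos ν hν hconv
  intro n m x
  rw [Finset.sum_range_add]
  congr 1
  refine Finset.sum_congr rfl fun k _ => ?_
  rw [add_comm n k, Function.iterate_add_apply]
end

section
/- Let T be a conservative non-singular map of a σ-finite measure space (X, m), P a probability measure absolutely continuous with respect to m, and (A_n) a sequence of pairwise disjoint measurable subsets of X. Then P(T^{-n} A_n) → 0 in Cesàro average, i.e. (1/N)·∑_{n=0}^{N-1} P(T^{-n} A_n) → 0. -/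
open MeasureTheory Filter

namespace Stmt4Aux

open ENNReal Set Topology

variable {X : Type*} [MeasurableSpace X]

/-- The Cesàro averages `(1/N) ∑_{k<N} ρ(T^{-k} A_k)` as `ℝ≥0∞`-valued sequence. -/
noncomputable def aSeq (T : X → X) (A : ℕ → Set X) (ρ : Measure X) (N : ℕ) : ℝ≥0∞ :=
  (∑ k ∈ Finset.range N, ρ (T^[k] ⁻¹' A k)) / N

/-- A generalized (ultrafilter) limit of the Cesàro averages. -/
noncomputable def Lam (φ : Ultrafilter ℕ) (T : X → X) (A : ℕ → Set X) (ρ : Measure X) : ℝ≥0∞ :=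
  limUnder (φ : Filter ℕ) (aSeq T A ρ)

variable (φ : Ultrafilter ℕ) (T : X → X) (A : ℕ → Set X)

lemma tendsto_aSeq_Lam (ρ : Measure X) :
    Tendsto (aSeq T A ρ) (φ : Filter ℕ) (𝓝 (Lam φ T A ρ)) := by
  apply le_nhds_lim
  obtain ⟨a, -, ha⟩ := isCompact_univ.ultrafilter_le_nhds (φ.map (aSeq T A ρ))
    (by simp [le_principal_iff])
  exact ⟨a, ha⟩

lemma Lam_eq_of_tendsto {ρ : Measure X} {c : ℝ≥0∞}
    (h : Tendsto (aSeq T A ρ) (φ : Filter ℕ) (𝓝 c)) : Lam φ T A ρ = c :=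
  tendsto_nhds_unique (tendsto_aSeq_Lam φ T A ρ) h

lemma aSeq_add (ρ σ : Measure X) (N : ℕ) :
    aSeq T A (ρ + σ) N = aSeq T A ρ N + aSeq T A σ N := by
  simp only [aSeq, Measure.add_apply, Finset.sum_add_distrib, ENNReal.add_div]

lemma Lam_add (ρ σ : Measure X) :
    Lam φ T A (ρ + σ) = Lam φ T A ρ + Lam φ T A σ := by
  apply Lam_eq_of_tendsto
  have := (tendsto_aSeq_Lam φ T A ρ).add (tendsto_aSeq_Lam φ T A σ)
  simpa only [← aSeq_add] using this

lemma Lam_smul (ρ : Measure X) {c : ℝ≥0∞} (hc : c ≠ ∞) :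
    Lam φ T A (c • ρ) = c * Lam φ T A ρ := by
  apply Lam_eq_of_tendsto
  have h : ∀ N, aSeq T A (c • ρ) N = c * aSeq T A ρ N := by
    intro N
    simp only [aSeq, Measure.smul_apply, smul_eq_mul, ← Finset.mul_sum, mul_div_assoc]
  have := ENNReal.Tendsto.const_mul (tendsto_aSeq_Lam φ T A ρ) (Or.inr hc)
  simpa only [← h] using this

lemma Lam_mono {ρ σ : Measure X} (h : ρ ≤ σ) : Lam φ T A ρ ≤ Lam φ T A σ := by
  refine le_of_tendsto_of_tendsto' (tendsto_aSeq_Lam φ T A ρ) (tendsto_aSeq_Lam φ T A σ) ?_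
  intro N
  apply ENNReal.div_le_div_right
  exact Finset.sum_le_sum fun k _ => Measure.le_iff'.1 h _

lemma Lam_le (hφ : (φ : Filter ℕ) ≤ atTop) (ρ : Measure X) :
    Lam φ T A ρ ≤ ρ univ := by
  refine le_of_tendsto (tendsto_aSeq_Lam φ T A ρ) ?_
  filter_upwards [hφ (eventually_ge_atTop 1)] with N hN
  have h1 : (∑ k ∈ Finset.range N, ρ (T^[k] ⁻¹' A k)) ≤ (N : ℝ≥0∞) * ρ univ := by
    calc ∑ k ∈ Finset.range N, ρ (T^[k] ⁻¹' A k)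
        ≤ ∑ _k ∈ Finset.range N, ρ univ := Finset.sum_le_sum fun k _ => measure_mono (subset_univ _)
      _ = (N : ℝ≥0∞) * ρ univ := by simp [Finset.sum_const, mul_comm]
  have hN0 : (N : ℝ≥0∞) ≠ 0 := Nat.cast_ne_zero.mpr (by omega)
  calc aSeq T A ρ N ≤ ((N : ℝ≥0∞) * ρ univ) / N := ENNReal.div_le_div_right h1 _
    _ = ρ univ := by
        rw [mul_comm, mul_div_assoc, ENNReal.div_self hN0 (by simp), mul_one]

lemma Lam_zero : Lam φ T A 0 = 0 := by
  apply Lam_eq_of_tendsto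
  have : aSeq T A 0 = fun _ => 0 := by
    funext N; simp [aSeq, ENNReal.zero_div]
  rw [this]
  exact tendsto_const_nhds

lemma Lam_restrict_tail_union (hφ : (φ : Filter ℕ) ≤ atTop) (ρ : Measure X)
    [IsFiniteMeasure ρ] {B : ℕ → Set X} (hm : ∀ i, MeasurableSet (B i))
    (hd : Pairwise (Function.onFun Disjoint B)) :
    Lam φ T A (ρ.restrict (⋃ i, B i)) = ∑' i, Lam φ T A (ρ.restrict (B i)) := by
  -- finite additivity with a tail term
  have hsplit : ∀ k : ℕ, Lam φ T A (ρ.restrict (⋃ i, B i)) =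
      (∑ i ∈ Finset.range k, Lam φ T A (ρ.restrict (B i))) +
        Lam φ T A (ρ.restrict (⋃ i, B (i + k))) := by
    intro k
    induction k with
    | zero => simp
    | succ k ih =>
      have hset : (⋃ i, B (i + k)) = B k ∪ ⋃ i, B (i + (k + 1)) := by
        ext x
        simp only [mem_iUnion, mem_union]
        constructor
        · rintro ⟨i, hi⟩
          rcases i with - | j
          · exact Or.inl (by simpa using hi)
          · exact Or.inr ⟨j, by convert hi using 2; omega⟩
        · rintro (hx | ⟨j, hj⟩)
          · exact ⟨0, by simpa using hx⟩
          · exact ⟨j + 1, by convert hj using 2; omega⟩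
      have hdisj2 : Disjoint (B k) (⋃ i, B (i + (k + 1))) := by
        refine Set.disjoint_iUnion_right.2 fun i => hd (by omega)
      have hmeas2 : MeasurableSet (⋃ i, B (i + (k + 1))) := MeasurableSet.iUnion fun i => hm _
      have : ρ.restrict (⋃ i, B (i + k)) =
          ρ.restrict (B k) + ρ.restrict (⋃ i, B (i + (k + 1))) := by
        rw [hset, Measure.restrict_union hdisj2 hmeas2]
      rw [ih, this, Lam_add, Finset.sum_range_succ]
      ring
  have htail_le : ∀ k : ℕ, Lam φ T A (ρ.restrict (⋃ i, B (i + k))) ≤ ∑' i, ρ (B (i + k)) := by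
    intro k
    refine (Lam_le φ T A hφ _).trans ?_
    rw [Measure.restrict_apply_univ]
    exact measure_iUnion_le _
  have hsum_ne : (∑' i, ρ (B i)) ≠ ∞ := by
    rw [← measure_iUnion hd hm]
    exact measure_ne_top _ _
  have htail0 : Tendsto (fun k => ∑' i, ρ (B (i + k))) atTop (𝓝 0) :=
    ENNReal.tendsto_sum_nat_add _ hsum_ne
  -- conclude
  have hle1 : ∑' i, Lam φ T A (ρ.restrict (B i)) ≤ Lam φ T A (ρ.restrict (⋃ i, B i)) := by
    refine le_of_tendsto (ENNReal.tendsto_nat_tsum _) (Eventually.of_forall fun k => ?_)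
    rw [hsplit k]
    exact le_add_right le_rfl
  have hle2 : Lam φ T A (ρ.restrict (⋃ i, B i)) ≤ ∑' i, Lam φ T A (ρ.restrict (B i)) := by
    have htend : Tendsto
        (fun k => (∑ i ∈ Finset.range k, Lam φ T A (ρ.restrict (B i))) + ∑' i, ρ (B (i + k)))
        atTop (𝓝 ((∑' i, Lam φ T A (ρ.restrict (B i))) + 0)) :=
      (ENNReal.tendsto_nat_tsum _).add htail0
    rw [add_zero] at htend
    refine ge_of_tendsto htend (Eventually.of_forall fun k => ?_)
    rw [hsplit k]
    exact add_le_add_right (htail_le k) _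
  exact le_antisymm hle2 hle1

/-- If all set-lintegrals of `G` are at most the measure of the set, then `G ≤ 1` a.e. -/
lemma le_one_ae (μ : Measure X) [IsFiniteMeasure μ] {G : X → ℝ≥0∞} (hG : Measurable G)
    (h : ∀ B, MeasurableSet B → ∫⁻ x in B, G x ∂μ ≤ μ B) : G ≤ᵐ[μ] 1 := by
  have hBj : ∀ j : ℕ, μ {x | ENNReal.ofReal (1 + 1 / (j + 1)) ≤ G x} = 0 := by
    intro j
    set c : ℝ≥0∞ := ENNReal.ofReal (1 + 1 / (j + 1)) with hc
    have hc1 : 1 < c := by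
      rw [hc, ENNReal.one_lt_ofReal]
      have : (0 : ℝ) < 1 / (j + 1) := by positivity
      linarith
    set Bj := {x | c ≤ G x} with hBjdef
    have hmeas : MeasurableSet Bj := measurableSet_le measurable_const hG
    have h1 : c * μ Bj ≤ ∫⁻ x in Bj, G x ∂μ := by
      rw [← setLIntegral_const Bj c]
      exact setLIntegral_mono hG fun x hx => hx
    have h2 : c * μ Bj ≤ μ Bj := h1.trans (h Bj hmeas)
    by_contra hne
    have hlt : μ Bj < c * μ Bj := by
      conv_lhs => rw [← one_mul (μ Bj)]
      rw [mul_comm 1 (μ Bj), mul_comm c (μ Bj)]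
      exact ENNReal.mul_lt_mul_right hne (measure_ne_top _ _) hc1
    exact absurd (h2.trans_lt hlt) (lt_irrefl _)
  have hsub : {x | ¬ G x ≤ 1} ⊆ ⋃ j : ℕ, {x | ENNReal.ofReal (1 + 1 / (j + 1)) ≤ G x} := by
    intro x hx
    simp only [mem_setOf_eq, not_le] at hx
    simp only [mem_iUnion, mem_setOf_eq]
    rcases eq_or_ne (G x) ∞ with htop | htop
    · exact ⟨0, by rw [htop]; exact le_top⟩
    · have ht : 1 < (G x).toReal := by
        rw [← ENNReal.toReal_one]
        exact ENNReal.toReal_strict_mono htop hx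
      obtain ⟨j, hj⟩ := exists_nat_one_div_lt (sub_pos.2 ht)
      refine ⟨j, ?_⟩
      have : (1 : ℝ) + 1 / (j + 1) ≤ (G x).toReal := by
        have : (1 : ℝ) / (j + 1) < (G x).toReal - 1 := by exact_mod_cast hj
        linarith
      calc ENNReal.ofReal (1 + 1 / (j + 1)) ≤ ENNReal.ofReal (G x).toReal :=
            ENNReal.ofReal_le_ofReal this
        _ = G x := ENNReal.ofReal_toReal htop
  have hnull : μ {x | ¬ G x ≤ 1} = 0 :=
    measure_mono_null hsub (measure_iUnion_null fun j => hBj j)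
  rw [EventuallyLE, ae_iff]
  simpa using hnull

/-- Combinatorial core: for pairwise disjoint sets, a point can match at most one
target per time instant. -/
lemma sum_indicator_le (hdisj : Pairwise (Function.onFun Disjoint A)) (x : X) (M N : ℕ) :
    ∑ n ∈ Finset.range M, ∑ k ∈ Finset.range N,
        (T^[k + n] ⁻¹' A k).indicator (1 : X → ℝ≥0∞) x ≤ ((N + M : ℕ) : ℝ≥0∞) := by
  classical
  have hval : ∀ n k : ℕ, (T^[k + n] ⁻¹' A k).indicator (1 : X → ℝ≥0∞) x =
      (if T^[k + n] x ∈ A k then (1 : ℝ≥0∞) else 0) := by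
    intro n k
    simp [Set.indicator_apply, Set.mem_preimage]
  simp only [hval]
  have hprod : ∑ n ∈ Finset.range M, ∑ k ∈ Finset.range N,
      (if T^[k + n] x ∈ A k then (1 : ℝ≥0∞) else 0) =
      ∑ p ∈ Finset.range M ×ˢ Finset.range N,
        (if T^[p.2 + p.1] x ∈ A p.2 then (1 : ℝ≥0∞) else 0) := by
    rw [Finset.sum_product]
  rw [hprod]
  set s := (Finset.range M ×ˢ Finset.range N).filter (fun p : ℕ × ℕ => T^[p.2 + p.1] x ∈ A p.2)
    with hs
  have hcard : ∑ p ∈ Finset.range M ×ˢ Finset.range N,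
      (if T^[p.2 + p.1] x ∈ A p.2 then (1 : ℝ≥0∞) else 0) = (s.card : ℝ≥0∞) := by
    rw [← Finset.sum_filter, ← hs, Finset.sum_const, nsmul_eq_mul, mul_one]
  rw [hcard]
  have hle : s.card ≤ N + M := by
    have := Finset.card_le_card_of_injOn (f := fun p : ℕ × ℕ => p.2 + p.1)
      (s := s) (t := Finset.range (N + M))
      (fun p hp => by
        simp only [Finset.mem_coe, hs, Finset.mem_filter, Finset.mem_product, Finset.mem_range] at hp
        simp only [Finset.mem_coe, Finset.mem_range]
        omega)
      (fun p hp q hq hpq => by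
        simp only [Finset.coe_filter, Set.mem_setOf_eq, hs, Finset.mem_filter,
          Finset.mem_product, Finset.mem_range] at hp hq
        simp only at hpq
        have hk : p.2 = q.2 := by
          by_contra hne
          have hd := hdisj hne
          rw [Function.onFun] at hd
          have hxp : T^[p.2 + p.1] x ∈ A p.2 := hp.2
          have hxq : T^[q.2 + q.1] x ∈ A q.2 := hq.2
          rw [hpq] at hxp
          exact Set.disjoint_left.mp hd hxp hxq
        have hn : p.1 = q.1 := by omega
        exact Prod.ext hn hk)
    simpa using this
  exact_mod_cast hle

lemma sum_Lam_map_le (hφ : (φ : Filter ℕ) ≤ atTop) (hdisj : Pairwise (Function.onFun Disjoint A))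
    (hA : ∀ n, MeasurableSet (A n)) (hTmeas : Measurable T)
    (μ : Measure X) [IsFiniteMeasure μ] {B : Set X} (hB : MeasurableSet B) (M : ℕ) :
    ∑ n ∈ Finset.range M, Lam φ T A (Measure.map T^[n] (μ.restrict B)) ≤ μ B := by
  have hiter : ∀ n : ℕ, Measurable (T^[n]) := fun n => hTmeas.iterate n
  -- pointwise (in `N`) bound for the sum of Cesàro averages
  have hbound : ∀ N : ℕ, 1 ≤ N →
      ∑ n ∈ Finset.range M, aSeq T A (Measure.map T^[n] (μ.restrict B)) N ≤
        μ B + ((M : ℝ≥0∞) * μ B) * (N : ℝ≥0∞)⁻¹ := by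
    intro N hN
    have hN0 : (N : ℝ≥0∞) ≠ 0 := Nat.cast_ne_zero.mpr (by omega)
    have hNtop : (N : ℝ≥0∞) ≠ ∞ := by simp
    have happly : ∀ n k : ℕ,
        (Measure.map T^[n] (μ.restrict B)) (T^[k] ⁻¹' A k) =
          (μ.restrict B) (T^[k + n] ⁻¹' A k) := by
      intro n k
      rw [Measure.map_apply (hiter n) ((hA k).preimage (hiter k))]
      congr 1
      rw [Function.iterate_add T k n, Set.preimage_comp]
    have haSeq : ∀ n : ℕ, aSeq T A (Measure.map T^[n] (μ.restrict B)) N =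
        (∑ k ∈ Finset.range N, (μ.restrict B) (T^[k + n] ⁻¹' A k)) / N := by
      intro n
      unfold aSeq
      congr 1
      exact Finset.sum_congr rfl fun k _ => happly n k
    have hsum : ∑ n ∈ Finset.range M, ∑ k ∈ Finset.range N,
        (μ.restrict B) (T^[k + n] ⁻¹' A k) ≤ ((N + M : ℕ) : ℝ≥0∞) * μ B := by
      have hint : ∀ (n k : ℕ), (μ.restrict B) (T^[k + n] ⁻¹' A k) =
          ∫⁻ x, (T^[k + n] ⁻¹' A k).indicator (1 : X → ℝ≥0∞) x ∂(μ.restrict B) := by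
        intro n k
        rw [lintegral_indicator_one ((hA k).preimage (hiter (k + n)))]
      have hmeaseach : ∀ (n k : ℕ),
          Measurable ((T^[k + n] ⁻¹' A k).indicator (1 : X → ℝ≥0∞)) := by
        intro n k
        exact measurable_one.indicator ((hA k).preimage (hiter (k + n)))
      calc ∑ n ∈ Finset.range M, ∑ k ∈ Finset.range N, (μ.restrict B) (T^[k + n] ⁻¹' A k)
          = ∫⁻ x, (∑ n ∈ Finset.range M, ∑ k ∈ Finset.range N,
              (T^[k + n] ⁻¹' A k).indicator (1 : X → ℝ≥0∞) x) ∂(μ.restrict B) := by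
            rw [lintegral_finset_sum _ (fun n _ => Finset.measurable_sum _
              (fun k _ => hmeaseach n k))]
            refine Finset.sum_congr rfl fun n _ => ?_
            rw [lintegral_finset_sum _ (fun k _ => hmeaseach n k)]
            exact Finset.sum_congr rfl fun k _ => hint n k
        _ ≤ ∫⁻ _x, ((N + M : ℕ) : ℝ≥0∞) ∂(μ.restrict B) := by
            exact lintegral_mono fun x => sum_indicator_le T A hdisj x M N
        _ = ((N + M : ℕ) : ℝ≥0∞) * μ B := by
            rw [lintegral_const, Measure.restrict_apply_univ]
    calc ∑ n ∈ Finset.range M, aSeq T A (Measure.map T^[n] (μ.restrict B)) N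
        = (∑ n ∈ Finset.range M, ∑ k ∈ Finset.range N,
            (μ.restrict B) (T^[k + n] ⁻¹' A k)) * (N : ℝ≥0∞)⁻¹ := by
          simp only [haSeq, div_eq_mul_inv, ← Finset.sum_mul]
      _ ≤ (((N + M : ℕ) : ℝ≥0∞) * μ B) * (N : ℝ≥0∞)⁻¹ :=
          mul_le_mul_left hsum _
      _ = μ B + ((M : ℝ≥0∞) * μ B) * (N : ℝ≥0∞)⁻¹ := by
          push_cast
          rw [add_mul, add_mul, mul_assoc, mul_comm (μ B), ← mul_assoc (N : ℝ≥0∞),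
            ENNReal.mul_inv_cancel hN0 hNtop, one_mul]
  -- pass to the limit along the ultrafilter
  have htendL : Tendsto (fun N => ∑ n ∈ Finset.range M,
      aSeq T A (Measure.map T^[n] (μ.restrict B)) N) (φ : Filter ℕ)
      (𝓝 (∑ n ∈ Finset.range M, Lam φ T A (Measure.map T^[n] (μ.restrict B)))) :=
    tendsto_finset_sum _ fun n _ => tendsto_aSeq_Lam φ T A _
  have htendR : Tendsto (fun N : ℕ => μ B + ((M : ℝ≥0∞) * μ B) * (N : ℝ≥0∞)⁻¹)
      (φ : Filter ℕ) (𝓝 (μ B + 0)) := by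
    refine Tendsto.mono_left ?_ hφ
    have h0 : Tendsto (fun N : ℕ => ((M : ℝ≥0∞) * μ B) * (N : ℝ≥0∞)⁻¹) atTop (𝓝 0) := by
      have := ENNReal.Tendsto.const_mul (a := (M : ℝ≥0∞) * μ B)
        ENNReal.tendsto_inv_nat_nhds_zero
        (Or.inr (ENNReal.mul_ne_top (by simp) (measure_ne_top _ _)))
      simpa using this
    simpa using tendsto_const_nhds.add h0
  rw [add_zero] at htendR
  refine le_of_tendsto_of_tendsto htendL htendR ?_
  filter_upwards [hφ (eventually_ge_atTop 1)] with N hN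
  exact hbound N hN

/-- Duality: the generalized limit of Cesàro averages of a measure `ρ ≪ μ` equals the
integral against the density `h` representing `B ↦ Lam (μ.restrict B)`. -/
lemma LamD (hφ : (φ : Filter ℕ) ≤ atTop) (μ : Measure X) [IsFiniteMeasure μ]
    {h : X → ℝ≥0∞} (hmeas : Measurable h)
    (hrep : ∀ B : Set X, MeasurableSet B → ∫⁻ x in B, h x ∂μ = Lam φ T A (μ.restrict B))
    (ρ : Measure X) [IsFiniteMeasure ρ] (hρμ : ρ ≪ μ) :
    Lam φ T A ρ = ∫⁻ x, h x ∂ρ := by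
  set ψ := ρ.rnDeriv μ with hψdef
  have hψmeas : Measurable ψ := Measure.measurable_rnDeriv ρ μ
  have hψρ : μ.withDensity ψ = ρ := Measure.withDensity_rnDeriv_eq ρ μ hρμ
  -- the main estimate, for every resolution `g = 2⁻ʲ`
  have key : ∀ j : ℕ,
      Lam φ T A ρ ≤ (∫⁻ x, h x ∂ρ) + ((2 : ℝ≥0∞)⁻¹ ^ j) * μ univ ∧
      (∫⁻ x, h x ∂ρ) ≤ Lam φ T A ρ + ((2 : ℝ≥0∞)⁻¹ ^ j) * μ univ := by
    intro j
    set g : ℝ≥0∞ := (2 : ℝ≥0∞)⁻¹ ^ j with hgdef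
    have hg0 : g ≠ 0 := by
      simp [hgdef, pow_ne_zero]
    have hgtop : g ≠ ∞ := by
      simp [hgdef]
    set C : ℕ → Set X := fun i => {x | (i : ℝ≥0∞) * g ≤ ψ x ∧ ψ x < ((i : ℝ≥0∞) + 1) * g}
      with hCdef
    have hCmeas : ∀ i : ℕ, MeasurableSet (C i) := by
      intro i
      have : C i = ψ ⁻¹' (Set.Ico ((i : ℝ≥0∞) * g) (((i : ℝ≥0∞) + 1) * g)) := rfl
      rw [this]
      exact hψmeas measurableSet_Ico
    have hCdisj' : ∀ a b : ℕ, a < b → Disjoint (C a) (C b) := by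
      intro a b hab
      refine Set.disjoint_left.2 fun x hx hx' => ?_
      have h1 : ψ x < ((a : ℝ≥0∞) + 1) * g := hx.2
      have h2 : ((b : ℝ≥0∞)) * g ≤ ψ x := hx'.1
      have hle : ((a : ℝ≥0∞) + 1) * g ≤ ((b : ℝ≥0∞)) * g := by
        apply mul_le_mul_left
        have hnat : ((a + 1 : ℕ) : ℝ≥0∞) ≤ (b : ℝ≥0∞) := Nat.cast_le.mpr (by omega)
        simpa using hnat
      exact absurd (h1.trans_le (hle.trans h2)) (lt_irrefl _)
    have hCdisj : Pairwise (Function.onFun Disjoint C) := by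
      intro a b hne
      rcases lt_or_gt_of_ne hne with hlt | hgt
      · exact hCdisj' a b hlt
      · exact (hCdisj' b a hgt).symm
    have hcov : {x | ψ x < ∞} ⊆ ⋃ i, C i := by
      intro x hx
      simp only [mem_setOf_eq] at hx
      have hdivfin : ψ x / g < ∞ := ENNReal.div_lt_top hx.ne hg0
      set y := ψ x / g with hydef
      set i := Nat.floor y.toReal with hidef
      have h1 : (i : ℝ≥0∞) ≤ y := by
        have : (i : ℝ) ≤ y.toReal := Nat.floor_le ENNReal.toReal_nonneg
        calc (i : ℝ≥0∞) = ENNReal.ofReal (i : ℝ) := by simp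
          _ ≤ ENNReal.ofReal y.toReal := ENNReal.ofReal_le_ofReal this
          _ = y := ENNReal.ofReal_toReal hdivfin.ne
      have h2 : y < (i : ℝ≥0∞) + 1 := by
        have : y.toReal < i + 1 := Nat.lt_floor_add_one _
        calc y = ENNReal.ofReal y.toReal := (ENNReal.ofReal_toReal hdivfin.ne).symm
          _ < ENNReal.ofReal ((i : ℝ) + 1) := by
              rw [ENNReal.ofReal_lt_ofReal_iff (by positivity)]
              exact this
          _ = (i : ℝ≥0∞) + 1 := by
              rw [ENNReal.ofReal_add (by positivity) (by norm_num)]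
              simp
      refine mem_iUnion.2 ⟨i, ?_⟩
      constructor
      · rw [← ENNReal.le_div_iff_mul_le (Or.inl hg0) (Or.inl hgtop)]
        exact h1
      · have := ENNReal.div_lt_iff (Or.inl hg0) (Or.inl hgtop) |>.1 h2
        calc ψ x = ψ x := rfl
          _ < ((i : ℝ≥0∞) + 1) * g := this
    have hU : MeasurableSet (⋃ i, C i) := MeasurableSet.iUnion hCmeas
    have hcompl_null_μ : μ ((⋃ i, C i)ᶜ) = 0 := by
      have hae : ∀ᵐ x ∂μ, ψ x < ∞ := Measure.rnDeriv_lt_top ρ μ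
      refine measure_mono_null ?_ (ae_iff.1 hae)
      intro x hx
      simp only [mem_compl_iff] at hx
      simp only [mem_setOf_eq, not_lt, top_le_iff]
      by_contra hne
      exact hx (hcov (by simp [lt_top_iff_ne_top, hne]))
    have hcompl_null_ρ : ρ ((⋃ i, C i)ᶜ) = 0 := hρμ hcompl_null_μ
    have hρrestrict : ρ.restrict (⋃ i, C i) = ρ := by
      rw [Measure.restrict_congr_set (ae_eq_univ.2 hcompl_null_ρ), Measure.restrict_univ]
    -- decompose Lam and the integral over the partition
    have hLam_decomp : Lam φ T A ρ = ∑' i : ℕ, Lam φ T A (ρ.restrict (C i)) := by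
      conv_lhs => rw [← hρrestrict]
      exact Lam_restrict_tail_union φ T A hφ ρ hCmeas hCdisj
    have hint_decomp : ∫⁻ x, h x ∂ρ = ∑' i : ℕ, ∫⁻ x in C i, h x ∂ρ := by
      rw [← lintegral_iUnion hCmeas hCdisj]
      rw [← setLIntegral_univ (μ := ρ)]
      refine (setLIntegral_congr ?_).symm
      exact ae_eq_univ.2 hcompl_null_ρ
    -- per-piece bounds
    have hκle : ∀ i : ℕ, Lam φ T A (μ.restrict (C i)) ≤ μ (C i) := by
      intro i
      refine (Lam_le φ T A hφ _).trans ?_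
      rw [Measure.restrict_apply_univ]
    have hrestrict_eq : ∀ i : ℕ, ρ.restrict (C i) = (μ.restrict (C i)).withDensity ψ := by
      intro i
      rw [← hψρ, restrict_withDensity (hCmeas i)]
    have hlow : ∀ i : ℕ, ((i : ℝ≥0∞) * g) * Lam φ T A (μ.restrict (C i)) ≤
        Lam φ T A (ρ.restrict (C i)) := by
      intro i
      have hmle : ((i : ℝ≥0∞) * g) • μ.restrict (C i) ≤ ρ.restrict (C i) := by
        rw [hrestrict_eq i, ← withDensity_const]
        refine withDensity_mono ?_
        refine (ae_restrict_iff' (hCmeas i)).2 (Eventually.of_forall fun x hx => hx.1)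
      calc ((i : ℝ≥0∞) * g) * Lam φ T A (μ.restrict (C i))
          = Lam φ T A (((i : ℝ≥0∞) * g) • μ.restrict (C i)) :=
            (Lam_smul φ T A _ (ENNReal.mul_ne_top (by simp) hgtop)).symm
        _ ≤ Lam φ T A (ρ.restrict (C i)) := Lam_mono φ T A hmle
    have hhigh : ∀ i : ℕ, Lam φ T A (ρ.restrict (C i)) ≤
        (((i : ℝ≥0∞) + 1) * g) * Lam φ T A (μ.restrict (C i)) := by
      intro i
      have hmle : ρ.restrict (C i) ≤ (((i : ℝ≥0∞) + 1) * g) • μ.restrict (C i) := by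
        rw [hrestrict_eq i, ← withDensity_const]
        refine withDensity_mono ?_
        refine (ae_restrict_iff' (hCmeas i)).2 (Eventually.of_forall fun x hx => hx.2.le)
      calc Lam φ T A (ρ.restrict (C i))
          ≤ Lam φ T A ((((i : ℝ≥0∞) + 1) * g) • μ.restrict (C i)) := Lam_mono φ T A hmle
        _ = (((i : ℝ≥0∞) + 1) * g) * Lam φ T A (μ.restrict (C i)) :=
            Lam_smul φ T A _ (by
              refine ENNReal.mul_ne_top ?_ hgtop
              simp)
    have hint_low : ∀ i : ℕ, ((i : ℝ≥0∞) * g) * Lam φ T A (μ.restrict (C i)) ≤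
        ∫⁻ x in C i, h x ∂ρ := by
      intro i
      rw [← hrep _ (hCmeas i)]
      rw [hrestrict_eq i, lintegral_withDensity_eq_lintegral_mul _ hψmeas hmeas]
      calc ((i : ℝ≥0∞) * g) * ∫⁻ x in C i, h x ∂μ
          = ∫⁻ x in C i, ((i : ℝ≥0∞) * g) * h x ∂μ := (lintegral_const_mul _ hmeas).symm
        _ ≤ ∫⁻ x in C i, (ψ * h) x ∂μ := by
            refine setLIntegral_mono (hψmeas.mul hmeas) fun x hx => ?_
            exact mul_le_mul_left hx.1 _
    have hint_high : ∀ i : ℕ, ∫⁻ x in C i, h x ∂ρ ≤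
        (((i : ℝ≥0∞) + 1) * g) * Lam φ T A (μ.restrict (C i)) := by
      intro i
      rw [← hrep _ (hCmeas i)]
      rw [hrestrict_eq i, lintegral_withDensity_eq_lintegral_mul _ hψmeas hmeas]
      calc ∫⁻ x in C i, (ψ * h) x ∂μ
          ≤ ∫⁻ x in C i, (((i : ℝ≥0∞) + 1) * g) * h x ∂μ := by
            refine setLIntegral_mono (measurable_const.mul hmeas) fun x hx => ?_
            exact mul_le_mul_left hx.2.le _
        _ = (((i : ℝ≥0∞) + 1) * g) * ∫⁻ x in C i, h x ∂μ := lintegral_const_mul _ hmeas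
    -- the gap between the upper and lower bounds
    have hgap : ∑' i : ℕ, (((i : ℝ≥0∞) + 1) * g) * Lam φ T A (μ.restrict (C i)) ≤
        (∑' i : ℕ, ((i : ℝ≥0∞) * g) * Lam φ T A (μ.restrict (C i))) + g * μ univ := by
      have hrw : ∀ i : ℕ, (((i : ℝ≥0∞) + 1) * g) * Lam φ T A (μ.restrict (C i)) =
          ((i : ℝ≥0∞) * g) * Lam φ T A (μ.restrict (C i)) +
            g * Lam φ T A (μ.restrict (C i)) := by
        intro i
        rw [add_mul, one_mul, add_mul]
      calc ∑' i : ℕ, (((i : ℝ≥0∞) + 1) * g) * Lam φ T A (μ.restrict (C i))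
          = (∑' i : ℕ, ((i : ℝ≥0∞) * g) * Lam φ T A (μ.restrict (C i))) +
              ∑' i : ℕ, g * Lam φ T A (μ.restrict (C i)) := by
            rw [← ENNReal.tsum_add]
            exact tsum_congr hrw
        _ ≤ (∑' i : ℕ, ((i : ℝ≥0∞) * g) * Lam φ T A (μ.restrict (C i))) + g * μ univ := by
            refine add_le_add_right ?_ _
            rw [ENNReal.tsum_mul_left]
            refine mul_le_mul_right ?_ _
            calc ∑' i : ℕ, Lam φ T A (μ.restrict (C i)) ≤ ∑' i : ℕ, μ (C i) :=
                  ENNReal.tsum_le_tsum hκle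
              _ = μ (⋃ i, C i) := (measure_iUnion hCdisj hCmeas).symm
              _ ≤ μ univ := measure_mono (subset_univ _)
    constructor
    · calc Lam φ T A ρ = ∑' i : ℕ, Lam φ T A (ρ.restrict (C i)) := hLam_decomp
        _ ≤ ∑' i : ℕ, (((i : ℝ≥0∞) + 1) * g) * Lam φ T A (μ.restrict (C i)) :=
            ENNReal.tsum_le_tsum hhigh
        _ ≤ (∑' i : ℕ, ((i : ℝ≥0∞) * g) * Lam φ T A (μ.restrict (C i))) + g * μ univ := hgap
        _ ≤ (∑' i : ℕ, ∫⁻ x in C i, h x ∂ρ) + g * μ univ :=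
            add_le_add_left (ENNReal.tsum_le_tsum hint_low) _
        _ = (∫⁻ x, h x ∂ρ) + g * μ univ := by rw [← hint_decomp]
    · calc ∫⁻ x, h x ∂ρ = ∑' i : ℕ, ∫⁻ x in C i, h x ∂ρ := hint_decomp
        _ ≤ ∑' i : ℕ, (((i : ℝ≥0∞) + 1) * g) * Lam φ T A (μ.restrict (C i)) :=
            ENNReal.tsum_le_tsum hint_high
        _ ≤ (∑' i : ℕ, ((i : ℝ≥0∞) * g) * Lam φ T A (μ.restrict (C i))) + g * μ univ := hgap
        _ ≤ (∑' i : ℕ, Lam φ T A (ρ.restrict (C i))) + g * μ univ :=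
            add_le_add_left (ENNReal.tsum_le_tsum hlow) _
        _ = Lam φ T A ρ + g * μ univ := by rw [← hLam_decomp]
  -- let the resolution go to zero
  have htend : Tendsto (fun j : ℕ => ((2 : ℝ≥0∞)⁻¹ ^ j) * μ univ) atTop (𝓝 0) := by
    have hp : Tendsto (fun j : ℕ => (2 : ℝ≥0∞)⁻¹ ^ j) atTop (𝓝 0) :=
      ENNReal.tendsto_pow_atTop_nhds_zero_of_lt_one (by
        rw [ENNReal.inv_lt_one]
        exact one_lt_two)
    have := ENNReal.Tendsto.mul_const hp (Or.inr (measure_ne_top μ univ))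
    simpa using this
  have h1 : Lam φ T A ρ ≤ ∫⁻ x, h x ∂ρ := by
    have : Tendsto (fun j : ℕ => (∫⁻ x, h x ∂ρ) + ((2 : ℝ≥0∞)⁻¹ ^ j) * μ univ) atTop
        (𝓝 ((∫⁻ x, h x ∂ρ) + 0)) := tendsto_const_nhds.add htend
    rw [add_zero] at this
    exact ge_of_tendsto this (Eventually.of_forall fun j => (key j).1)
  have h2 : ∫⁻ x, h x ∂ρ ≤ Lam φ T A ρ := by
    have : Tendsto (fun j : ℕ => Lam φ T A ρ + ((2 : ℝ≥0∞)⁻¹ ^ j) * μ univ) atTop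
        (𝓝 (Lam φ T A ρ + 0)) := tendsto_const_nhds.add htend
    rw [add_zero] at this
    exact ge_of_tendsto this (Eventually.of_forall fun j => (key j).2)
  exact le_antisymm h1 h2

end Stmt4Aux

open Stmt4Aux ENNReal Topology in
/-- For a conservative non-singular map `T` on a σ-finite measure space, a probability
measure `P ≪ m` and pairwise disjoint measurable sets `A_n`, the probabilities
`P(T^{-n} A_n)` converge to `0` in Cesàro average. -/
theorem stmt4 {X : Type*} [MeasurableSpace X] (m : Measure X) [SigmaFinite m]
    (T : X → X) (hT : Conservative T m)
    (P : Measure X) [IsProbabilityMeasure P] (hP : P ≪ m)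
    (A : ℕ → Set X) (hA : ∀ n, MeasurableSet (A n))
    (hdisj : Pairwise (Function.onFun Disjoint A)) :
    Tendsto (fun N : ℕ => (∑ n ∈ Finset.range N, (P (T^[n] ⁻¹' A n)).toReal) / N)
      atTop (nhds 0) := by
  by_contra hcon
  set u : ℕ → ℝ := fun N => (∑ n ∈ Finset.range N, (P (T^[n] ⁻¹' A n)).toReal) / N with hu
  have hu0 : ∀ N, 0 ≤ u N := by
    intro N
    apply div_nonneg _ (Nat.cast_nonneg N)
    exact Finset.sum_nonneg fun n _ => ENNReal.toReal_nonneg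
  obtain ⟨ε, hε, hfreq⟩ : ∃ ε > 0, ∃ᶠ N in atTop, ε ≤ u N := by
    rw [Metric.tendsto_atTop] at hcon
    push_neg at hcon
    obtain ⟨ε, hε, hcon⟩ := hcon
    refine ⟨ε, hε, ?_⟩
    rw [frequently_atTop]
    intro N₀
    obtain ⟨n, hn, hd⟩ := hcon N₀
    refine ⟨n, hn, ?_⟩
    rwa [Real.dist_eq, sub_zero, abs_of_nonneg (hu0 n)] at hd
  set S := {N : ℕ | ε ≤ u N} with hS
  have hNeBot : (atTop ⊓ Filter.principal S).NeBot := frequently_iff_neBot.1 hfreq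
  set φ : Ultrafilter ℕ := Ultrafilter.of (atTop ⊓ Filter.principal S) with hφdef
  have hφle' : (φ : Filter ℕ) ≤ atTop ⊓ Filter.principal S := Ultrafilter.of_le _
  have hφ : (φ : Filter ℕ) ≤ atTop := hφle'.trans inf_le_left
  have hφS : S ∈ (φ : Filter ℕ) := hφle' (Filter.mem_inf_of_right (mem_principal_self S))
  -- an equivalent finite measure
  obtain ⟨μ, hμfin, hmμ, hμm⟩ := exists_isFiniteMeasure_absolutelyContinuous m
  haveI : IsFiniteMeasure μ := hμfin
  have hTmeas : Measurable T := hT.toQuasiMeasurePreserving.measurable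
  have hiter : ∀ n : ℕ, Measurable (T^[n]) := fun n => hTmeas.iterate n
  -- the measure κ given by the generalized limits
  set κ : Measure X := Measure.ofMeasurable (fun B _ => Lam φ T A (μ.restrict B))
    (by
      show Lam φ T A (μ.restrict ∅) = 0
      rw [Measure.restrict_empty]
      exact Lam_zero φ T A)
    (fun B hm hd => Lam_restrict_tail_union φ T A hφ μ hm hd) with hκdef
  have hκapp : ∀ B : Set X, MeasurableSet B → κ B = Lam φ T A (μ.restrict B) := by
    intro B hB
    exact Measure.ofMeasurable_apply B hB
  have hκle : κ ≤ μ := by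
    rw [Measure.le_iff]
    intro B hB
    rw [hκapp B hB]
    refine (Lam_le φ T A hφ _).trans ?_
    rw [Measure.restrict_apply_univ]
  haveI : IsFiniteMeasure κ := ⟨(Measure.le_iff'.1 hκle Set.univ).trans_lt (measure_lt_top μ _)⟩
  have hκμ : κ ≪ μ := Measure.absolutelyContinuous_of_le hκle
  set h : X → ℝ≥0∞ := κ.rnDeriv μ with hhdef
  have hmeas : Measurable h := Measure.measurable_rnDeriv κ μ
  have hrep : ∀ B : Set X, MeasurableSet B → ∫⁻ x in B, h x ∂μ = Lam φ T A (μ.restrict B) := by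
    intro B hB
    rw [Measure.setLIntegral_rnDeriv' hκμ hB, hκapp B hB]
  have h_le_one : h ≤ᵐ[μ] 1 := by
    refine le_one_ae μ hmeas fun B hB => ?_
    rw [hrep B hB]
    refine (Lam_le φ T A hφ _).trans ?_
    rw [Measure.restrict_apply_univ]
  -- positivity of the limit for P
  have hPμ : P ≪ μ := hP.trans hmμ
  have hLamP : ENNReal.ofReal ε ≤ Lam φ T A P := by
    refine ge_of_tendsto (tendsto_aSeq_Lam φ T A P) ?_
    filter_upwards [hφS, hφ (eventually_ge_atTop 1)] with N hNS hN1
    have hsumne : (∑ k ∈ Finset.range N, P (T^[k] ⁻¹' A k)) ≠ ∞ := by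
      refine (ENNReal.sum_lt_top.2 fun k _ => ?_).ne
      exact measure_lt_top P _
    have hne : aSeq T A P N ≠ ∞ := by
      unfold aSeq
      exact (ENNReal.div_lt_top hsumne (Nat.cast_ne_zero.2 (by omega))).ne
    have htoReal : (aSeq T A P N).toReal = u N := by
      unfold aSeq
      rw [ENNReal.toReal_div, ENNReal.toReal_sum (fun k _ => measure_ne_top P _)]
      simp [hu]
    calc ENNReal.ofReal ε ≤ ENNReal.ofReal (u N) := ENNReal.ofReal_le_ofReal hNS
      _ = ENNReal.ofReal ((aSeq T A P N).toReal) := by rw [htoReal]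
      _ = aSeq T A P N := ENNReal.ofReal_toReal hne
  have hLamPint : Lam φ T A P = ∫⁻ x, h x ∂P := LamD φ T A hφ μ hmeas hrep P hPμ
  -- the set where h is large
  set B := {x | ENNReal.ofReal (ε / 2) < h x} with hBdef
  have hBmeas : MeasurableSet B := measurableSet_lt measurable_const hmeas
  have hPB : P B ≠ 0 := by
    have hh1P : h ≤ᵐ[P] 1 := h_le_one.filter_mono hPμ.ae_le
    have hpt : ∀ᵐ x ∂P, h x ≤ B.indicator (1 : X → ℝ≥0∞) x + ENNReal.ofReal (ε / 2) := by
      filter_upwards [hh1P] with x hx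
      by_cases hxB : x ∈ B
      · rw [Set.indicator_of_mem hxB]
        calc h x ≤ 1 := by simpa using hx
          _ ≤ 1 + ENNReal.ofReal (ε / 2) := le_self_add
      · rw [Set.indicator_of_notMem hxB, zero_add]
        exact not_lt.1 hxB
    have hint : ENNReal.ofReal ε ≤ P B + ENNReal.ofReal (ε / 2) := by
      calc ENNReal.ofReal ε ≤ Lam φ T A P := hLamP
        _ = ∫⁻ x, h x ∂P := hLamPint
        _ ≤ ∫⁻ x, (B.indicator (1 : X → ℝ≥0∞) x + ENNReal.ofReal (ε / 2)) ∂P :=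
            lintegral_mono_ae hpt
        _ = P B + ENNReal.ofReal (ε / 2) := by
            rw [lintegral_add_left (measurable_one.indicator hBmeas),
              lintegral_indicator_one hBmeas, lintegral_const, measure_univ, mul_one]
    intro h0
    rw [h0, zero_add, ENNReal.ofReal_le_ofReal_iff (by positivity)] at hint
    linarith
  have hmB : m B ≠ 0 := fun h0 => hPB (hP h0)
  -- the a.e. bound on sums of h along the orbit
  have hsum_le : ∀ M : ℕ, (fun x => ∑ n ∈ Finset.range M, h (T^[n] x)) ≤ᵐ[μ] 1 := by
    intro M
    refine le_one_ae μ (Finset.measurable_sum _ fun n _ => hmeas.comp (hiter n)) fun B' hB' => ?_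
    have heach : ∀ n : ℕ, ∫⁻ x in B', h (T^[n] x) ∂μ =
        Lam φ T A (Measure.map T^[n] (μ.restrict B')) := by
      intro n
      have hρμ : Measure.map T^[n] (μ.restrict B') ≪ μ := by
        have h1 : Measure.map T^[n] (μ.restrict B') ≤ Measure.map T^[n] μ :=
          Measure.map_mono Measure.restrict_le_self (hiter n)
        have h2 : Measure.map T^[n] μ ≪ Measure.map T^[n] m := hμm.map (hiter n)
        have h3 : Measure.map T^[n] m ≪ m :=
          (hT.toQuasiMeasurePreserving.iterate n).absolutelyContinuous
        exact (Measure.absolutelyContinuous_of_le h1).trans (h2.trans (h3.trans hmμ))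
      rw [← lintegral_map hmeas (hiter n)]
      exact (LamD φ T A hφ μ hmeas hrep _ hρμ).symm
    calc ∫⁻ x in B', (∑ n ∈ Finset.range M, h (T^[n] x)) ∂μ
        = ∑ n ∈ Finset.range M, ∫⁻ x in B', h (T^[n] x) ∂μ :=
          lintegral_finset_sum _ fun n _ => hmeas.comp (hiter n)
      _ = ∑ n ∈ Finset.range M, Lam φ T A (Measure.map T^[n] (μ.restrict B')) :=
          Finset.sum_congr rfl fun n _ => heach n
      _ ≤ μ B' := sum_Lam_map_le φ T A hφ hdisj hA hTmeas μ hB' M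
  have hae_all : ∀ᵐ x ∂m, ∀ M : ℕ, ∑ n ∈ Finset.range M, h (T^[n] x) ≤ 1 := by
    have hμae : ∀ᵐ x ∂μ, ∀ M : ℕ, ∑ n ∈ Finset.range M, h (T^[n] x) ≤ 1 := by
      rw [MeasureTheory.ae_all_iff]
      intro M
      filter_upwards [hsum_le M] with x hx
      simpa using hx
    exact hμae.filter_mono hmμ.ae_le
  -- recurrence gives a point violating the bound
  have hfreqae := hT.frequently_ae_mem_and_frequently_image_mem hBmeas.nullMeasurableSet hmB
  obtain ⟨x, ⟨hxB, hxfreq⟩, hxsum⟩ := (hfreqae.and_eventually hae_all).exists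
  have hinf : {n : ℕ | T^[n] x ∈ B}.Infinite := Nat.frequently_atTop_iff_infinite.1 hxfreq
  set j := Nat.ceil (2 / ε) + 1 with hj
  obtain ⟨F, hFsub, hFcard⟩ := hinf.exists_subset_card_eq j
  set M := F.sup id + 1 with hM
  have hFrange : F ⊆ Finset.range M := by
    intro n hn
    have := Finset.le_sup (f := id) hn
    simp only [id] at this
    exact Finset.mem_range.2 (by omega)
  have hchain : (j : ℝ≥0∞) * ENNReal.ofReal (ε / 2) ≤ 1 := by
    calc (j : ℝ≥0∞) * ENNReal.ofReal (ε / 2)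
        = ∑ _n ∈ F, ENNReal.ofReal (ε / 2) := by
          rw [Finset.sum_const, hFcard, nsmul_eq_mul]
      _ ≤ ∑ n ∈ F, h (T^[n] x) := by
          refine Finset.sum_le_sum fun n hn => ?_
          exact le_of_lt (hFsub hn)
      _ ≤ ∑ n ∈ Finset.range M, h (T^[n] x) := Finset.sum_le_sum_of_subset hFrange
      _ ≤ 1 := hxsum M
  have hgt : (1 : ℝ≥0∞) < (j : ℝ≥0∞) * ENNReal.ofReal (ε / 2) := by
    have hjR : (2 / ε : ℝ) < (j : ℝ) := by
      have h1 : (2 / ε : ℝ) ≤ Nat.ceil (2 / ε) := Nat.le_ceil _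
      have h2 : ((Nat.ceil (2 / ε) : ℕ) : ℝ) + 1 = (j : ℝ) := by
        rw [hj]; push_cast; ring
      linarith
    have hmulR : (1 : ℝ) < (j : ℝ) * (ε / 2) := by
      have hhalf : (0 : ℝ) < ε / 2 := by positivity
      have : (2 / ε : ℝ) * (ε / 2) = 1 := by
        field_simp
      nlinarith
    calc (1 : ℝ≥0∞) = ENNReal.ofReal 1 := by simp
      _ < ENNReal.ofReal ((j : ℝ) * (ε / 2)) := by
          rw [ENNReal.ofReal_lt_ofReal_iff (by positivity)]
          exact hmulR
      _ = (j : ℝ≥0∞) * ENNReal.ofReal (ε / 2) := by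
          rw [ENNReal.ofReal_mul (by positivity)]
          congr 1
          exact ENNReal.ofReal_natCast j
  exact absurd hchain (not_le.2 hgt)
end

section
/- Let Y, Y_1, Y_2, … be i.i.d. ℕ-valued random variables with P(Y = n) = c/(n (log n)^2) for n ≥ 2 (c a normalizing constant), so P(Y > s) ~ c/log s. Assuming the renewal local limit P(∃j, Y_1+⋯+Y_j = s) ~ P(Y=s)/P(Y>s)^2 as s → ∞, the Markov chain X_n on ℕ starting at 0 whose excursions from 0 have i.i.d. lengths distributed as Y satisfies P(h(X_n) = k) ~ 1/((log k)·(n−k)) as k → ∞ and n−k → ∞, where h(X_n) is the number of steps since the last visit to 0. -/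
open MeasureTheory Filter ProbabilityTheory

/-- The excursion length distribution: `p n = c/(n (log n)^2)` for `n ≥ 2`, else `0`. -/
noncomputable def excursionLaw (c : ℝ) (n : ℕ) : ℝ :=
  if 2 ≤ n then c / (n * (Real.log n) ^ 2) else 0

/-- Partial sums `W_j = Y_0 + ⋯ + Y_{j-1}` of the excursion lengths: the renewal times
of the Markov chain. -/
def renewalTime {Ω : Type*} (Y : ℕ → Ω → ℕ) (j : ℕ) (ω : Ω) : ℕ :=
  ∑ i ∈ Finset.range j, Y i ω

/-- The event that the height of the chain at time `n` equals `k`: some renewal occurs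
at time `n - k` and the following excursion has length `> k`. -/
def heightEq {Ω : Type*} (Y : ℕ → Ω → ℕ) (n k : ℕ) : Set Ω :=
  {ω | ∃ j : ℕ, renewalTime Y j ω = n - k ∧ k < Y j ω}

namespace Stmt12Aux

lemma telescope_hasSum (b : ℕ → ℝ) (hmono : ∀ n, b (n+1) ≤ b n)
    (h0 : Tendsto b atTop (nhds 0)) : HasSum (fun m => b m - b (m+1)) (b 0) := by
  have hnn : ∀ n, 0 ≤ b n - b (n+1) := fun n => sub_nonneg.2 (hmono n)
  have hanti : Antitone b := antitone_nat_of_succ_le hmono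
  have hbN : ∀ N, 0 ≤ b N := fun N => hanti.le_of_tendsto h0 N
  have hps : ∀ N, ∑ i ∈ Finset.range N, (b i - b (i+1)) = b 0 - b N :=
    fun N => Finset.sum_range_sub' b N
  have hbd : Summable (fun m => b m - b (m+1)) := by
    apply summable_of_sum_range_le hnn
    intro N; rw [hps]; linarith [hbN N]
  have ht : Tendsto (fun N => ∑ i ∈ Finset.range N, (b i - b (i+1))) atTop (nhds (b 0)) := by
    simp only [hps]
    simpa using tendsto_const_nhds.sub h0
  have h2 := hbd.hasSum
  rwa [tendsto_nhds_unique h2.tendsto_sum_nat ht] at h2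

lemma log_gap_bounds (x : ℝ) (hx : 2 ≤ x) :
    1/(x+1) ≤ Real.log (x+1) - Real.log x ∧ Real.log (x+1) - Real.log x ≤ 1/x := by
  have hx0 : 0 < x := by linarith
  have hx1 : 0 < x + 1 := by linarith
  constructor
  · have h := Real.log_le_sub_one_of_pos (show 0 < x/(x+1) by positivity)
    rw [Real.log_div hx0.ne' hx1.ne'] at h
    have : x/(x+1) - 1 = -(1/(x+1)) := by field_simp; ring
    linarith [this ▸ h]
  · have h := Real.log_le_sub_one_of_pos (show 0 < (x+1)/x by positivity)
    rw [Real.log_div hx1.ne' hx0.ne'] at h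
    have : (x+1)/x - 1 = 1/x := by field_simp; ring
    linarith [this ▸ h]

lemma termA (c x : ℝ) (hc : 0 ≤ c) (hx : 2 ≤ x) :
    c/Real.log x - c/Real.log (x+1) ≤ c/(x * (Real.log x)^2) := by
  obtain ⟨h1, h2⟩ := log_gap_bounds x hx
  have ha : 0 < Real.log x := Real.log_pos (by linarith)
  have hb : 0 < Real.log (x+1) := Real.log_pos (by linarith)
  have hab : Real.log x ≤ Real.log (x+1) := by
    linarith [h1, one_div_pos.2 (show (0:ℝ) < x+1 by linarith)]
  have hx0 : 0 < x := by linarith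
  rw [div_sub_div _ _ ha.ne' hb.ne', div_le_div_iff₀ (by positivity) (by positivity)]
  have hd : (Real.log (x+1) - Real.log x) * x ≤ 1 := (le_div_iff₀ hx0).1 h2
  nlinarith [mul_le_mul_of_nonneg_left hd (by positivity : (0:ℝ) ≤ c * Real.log x ^ 2),
    mul_le_mul_of_nonneg_left hab (mul_nonneg hc ha.le)]

lemma termB (c x : ℝ) (hc : 0 ≤ c) (hx : 2 ≤ x) :
    c/((x+1) * (Real.log (x+1))^2) ≤ c/Real.log x - c/Real.log (x+1) := by
  obtain ⟨h1, h2⟩ := log_gap_bounds x hx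
  have ha : 0 < Real.log x := Real.log_pos (by linarith)
  have hb : 0 < Real.log (x+1) := Real.log_pos (by linarith)
  have hab : Real.log x ≤ Real.log (x+1) := by
    have := Real.log_le_log (by linarith : (0:ℝ) < x) (by linarith : x ≤ x+1)
    linarith
  have hx1 : 0 < x + 1 := by linarith
  rw [div_sub_div _ _ ha.ne' hb.ne', div_le_div_iff₀ (by positivity) (by positivity)]
  have hd : 1 ≤ (Real.log (x+1) - Real.log x) * (x+1) := (div_le_iff₀ hx1).1 h1
  nlinarith [mul_le_mul_of_nonneg_left hd (by positivity : (0:ℝ) ≤ c * Real.log (x+1) ^ 2),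
    mul_le_mul_of_nonneg_left hab (mul_nonneg hc hb.le)]

lemma telescope_log (c : ℝ) (hc : 0 ≤ c) (t : ℝ) (ht : 2 ≤ t) :
    HasSum (fun m : ℕ => c / Real.log (t + m) - c / Real.log (t + (m+1))) (c / Real.log t) := by
  have key := telescope_hasSum (fun m : ℕ => c / Real.log (t + m)) ?_ ?_
  · simpa using key
  · intro n
    have h1 : (0:ℝ) < Real.log (t + n) :=
      Real.log_pos (by push_cast; linarith [Nat.cast_nonneg (α := ℝ) n])
    apply div_le_div_of_nonneg_left hc h1
    apply Real.log_le_log (by positivity)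
    push_cast; linarith
  · apply Tendsto.div_atTop (tendsto_const_nhds)
    apply Real.tendsto_log_atTop.comp
    exact tendsto_atTop_add_const_left _ _ (tendsto_natCast_atTop_atTop)

lemma tail_bounds (c : ℝ) (hc : 0 ≤ c) (hsum : Summable (fun n => excursionLaw c n))
    (s : ℕ) (hs : 2 ≤ s) :
    c / Real.log (s+1) ≤ (∑' m : ℕ, excursionLaw c (s+1+m)) ∧
    (∑' m : ℕ, excursionLaw c (s+1+m)) ≤ c / Real.log s := by
  have hf : Summable (fun m : ℕ => excursionLaw c (s+1+m)) := by
    have := hsum.comp_injective (add_right_injective (s+1))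
    exact this
  have hfe : ∀ m : ℕ, excursionLaw c (s+1+m) = c / (((s:ℝ)+1+m) * (Real.log ((s:ℝ)+1+m))^2) := by
    intro m
    rw [excursionLaw, if_pos (by omega)]
    push_cast
    ring_nf
  have hs2 : (2:ℝ) ≤ (s:ℝ) := by exact_mod_cast hs
  constructor
  · have htel := telescope_log c hc ((s:ℝ)+1) (by linarith)
    rw [← htel.tsum_eq]
    apply Summable.tsum_le_tsum _ htel.summable hf
    intro m
    rw [hfe m]
    have := termA c ((s:ℝ)+1+m) hc (by linarith [Nat.cast_nonneg (α := ℝ) m])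
    calc c / Real.log ((s:ℝ)+1+m) - c / Real.log ((s:ℝ)+1+(m+1))
        = c / Real.log ((s:ℝ)+1+m) - c / Real.log (((s:ℝ)+1+m)+1) := by ring_nf
      _ ≤ c / (((s:ℝ)+1+m) * (Real.log ((s:ℝ)+1+m))^2) := this
  · have htel := telescope_log c hc (s:ℝ) hs2
    rw [← htel.tsum_eq]
    apply Summable.tsum_le_tsum _ hf htel.summable
    intro m
    rw [hfe m]
    have := termB c ((s:ℝ)+m) hc (by linarith [Nat.cast_nonneg (α := ℝ) m])
    calc c / (((s:ℝ)+1+m) * (Real.log ((s:ℝ)+1+m))^2)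
        = c / ((((s:ℝ)+m)+1) * (Real.log (((s:ℝ)+m)+1))^2) := by ring_nf
      _ ≤ c / Real.log ((s:ℝ)+m) - c / Real.log (((s:ℝ)+m)+1) := this
      _ = c / Real.log ((s:ℝ)+m) - c / Real.log ((s:ℝ)+(m+1)) := by ring_nf

lemma measNat (s : Set ℕ) : MeasurableSet s := trivial

lemma renewal_meas {Ω : Type*} [MeasurableSpace Ω] (Y : ℕ → Ω → ℕ)
    (hYmeas : ∀ i, Measurable (Y i)) (j : ℕ) :
    Measurable (renewalTime Y j) := by
  unfold renewalTime
  exact Finset.measurable_sum _ (fun i _ => hYmeas i)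

lemma point_eq {Ω : Type*} [MeasurableSpace Ω] (μ : Measure Ω) [IsProbabilityMeasure μ]
    (c : ℝ) (Y : ℕ → Ω → ℕ)
    (hlaw : ∀ i n, (μ (Y i ⁻¹' {n})).toReal = excursionLaw c n) (i m : ℕ) :
    μ (Y i ⁻¹' {m}) = μ (Y 0 ⁻¹' {m}) := by
  refine (ENNReal.toReal_eq_toReal_iff' (measure_ne_top μ _) (measure_ne_top μ _)).1 ?_
  rw [hlaw, hlaw]

lemma tail_decomp {Ω : Type*} [MeasurableSpace Ω] (μ : Measure Ω) (Y : ℕ → Ω → ℕ)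
    (hYmeas : ∀ i, Measurable (Y i)) (i k : ℕ) :
    μ {ω | k < Y i ω} = ∑' m : ℕ, μ (Y i ⁻¹' {k+1+m}) := by
  have : {ω | k < Y i ω} = ⋃ m : ℕ, Y i ⁻¹' {k+1+m} := by
    ext ω
    simp only [Set.mem_setOf_eq, Set.mem_iUnion, Set.mem_preimage, Set.mem_singleton_iff]
    constructor
    · intro h; exact ⟨Y i ω - (k+1), by omega⟩
    · rintro ⟨m, hm⟩; omega
  rw [this, measure_iUnion _ (fun m => hYmeas i (measNat _))]
  intro a b hab
  simp only [Function.onFun, Set.disjoint_left, Set.mem_preimage, Set.mem_singleton_iff]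
  intro ω h1 h2; omega

lemma tail_toReal {Ω : Type*} [MeasurableSpace Ω] (μ : Measure Ω) [IsProbabilityMeasure μ]
    (c : ℝ) (Y : ℕ → Ω → ℕ) (hYmeas : ∀ i, Measurable (Y i))
    (hlaw : ∀ i n, (μ (Y i ⁻¹' {n})).toReal = excursionLaw c n) (i k : ℕ) :
    (μ {ω | k < Y i ω}).toReal = ∑' m : ℕ, excursionLaw c (k+1+m) := by
  rw [tail_decomp μ Y hYmeas i k, ENNReal.tsum_toReal_eq (fun m => measure_ne_top μ _)]
  simp only [hlaw]

lemma law_summable {Ω : Type*} [MeasurableSpace Ω] (μ : Measure Ω) [IsProbabilityMeasure μ]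
    (c : ℝ) (Y : ℕ → Ω → ℕ) (hYmeas : ∀ i, Measurable (Y i))
    (hlaw : ∀ i n, (μ (Y i ⁻¹' {n})).toReal = excursionLaw c n) :
    Summable (fun n => excursionLaw c n) := by
  have huniv : (⋃ n : ℕ, Y 0 ⁻¹' {n}) = Set.univ := by
    ext ω; simp
  have : ∑' n : ℕ, μ (Y 0 ⁻¹' {n}) = 1 := by
    rw [← measure_iUnion _ (fun m => hYmeas 0 (measNat _))]
    · rw [huniv]; simp
    · intro a b hab
      simp only [Function.onFun, Set.disjoint_left, Set.mem_preimage, Set.mem_singleton_iff]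
      intro ω h1 h2; omega
  have hne : ∑' n : ℕ, μ (Y 0 ⁻¹' {n}) ≠ ⊤ := by rw [this]; exact ENNReal.one_ne_top
  have := ENNReal.summable_toReal hne
  simpa only [hlaw] using this

lemma height_factor {Ω : Type*} [MeasurableSpace Ω] (μ : Measure Ω) [IsProbabilityMeasure μ]
    (c : ℝ) (Y : ℕ → Ω → ℕ) (hYmeas : ∀ i, Measurable (Y i))
    (hindep : iIndepFun Y μ)
    (hlaw : ∀ i n, (μ (Y i ⁻¹' {n})).toReal = excursionLaw c n)
    (n k : ℕ) :
    μ (heightEq Y n k) = μ {ω | k < Y 0 ω} * μ {ω | ∃ j : ℕ, renewalTime Y j ω = n - k} := by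
  set s := n - k with hs
  set A : ℕ → Set Ω := fun j => renewalTime Y j ⁻¹' {s} with hA
  set B : ℕ → Set Ω := fun j => Y j ⁻¹' Set.Ioi k with hB
  set N : Set Ω := ⋃ i, Y i ⁻¹' {0} with hN
  have hNnull : μ N = 0 := by
    apply measure_iUnion_null
    intro i
    refine (ENNReal.toReal_eq_zero_iff _).1 ?_ |>.resolve_right (measure_ne_top μ _)
    rw [hlaw]; simp [excursionLaw]
  have hdisj : ∀ i j : ℕ, i ≠ j → A i ∩ A j ⊆ N := by
    intro i j hij ω ⟨hi, hj⟩
    by_contra hωN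
    simp only [hN, Set.mem_iUnion, Set.mem_preimage, Set.mem_singleton_iff, not_exists] at hωN
    have hpos : ∀ l, 1 ≤ Y l ω := fun l => Nat.one_le_iff_ne_zero.2 (hωN l)
    have hmono : StrictMono (fun j => renewalTime Y j ω) := by
      apply strictMono_nat_of_lt_succ
      intro l
      simp only [renewalTime, Finset.sum_range_succ]
      have := hpos l; omega
    simp only [hA, Set.mem_preimage, Set.mem_singleton_iff] at hi hj
    exact hij (hmono.injective (hi.trans hj.symm))
  have hAmeas : ∀ j, MeasurableSet (A j) := fun j => renewal_meas Y hYmeas j (measNat _)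
  have hBmeas : ∀ j, MeasurableSet (B j) := fun j => hYmeas j (measNat _)
  have hheight : heightEq Y n k = ⋃ j, A j ∩ B j := by
    ext ω
    simp [heightEq, hA, hB, hs, Set.mem_iUnion, Set.mem_inter_iff]
  have hUA : {ω | ∃ j : ℕ, renewalTime Y j ω = s} = ⋃ j, A j := by
    ext ω; simp [hA]
  have hindepAB : ∀ j, μ (A j ∩ B j) = μ (A j) * μ (B j) := by
    intro j
    have hind : IndepFun (renewalTime Y j) (Y j) μ := by
      have := hindep.indepFun_sum_range_succ hYmeas j
      have heq : (∑ i ∈ Finset.range j, Y i) = renewalTime Y j := by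
        funext ω; simp [renewalTime, Finset.sum_apply]
      rwa [heq] at this
    exact hind.measure_inter_preimage_eq_mul {s} (Set.Ioi k) (measNat _) (measNat _)
  have hBeq : ∀ j, μ (B j) = μ (B 0) := by
    intro j
    have h1 : B j = {ω | k < Y j ω} := rfl
    have h2 : B 0 = {ω | k < Y 0 ω} := rfl
    rw [h1, h2, tail_decomp μ Y hYmeas j k, tail_decomp μ Y hYmeas 0 k]
    exact tsum_congr (fun m => point_eq μ c Y hlaw j _)
  have hBIoi : B 0 = {ω | k < Y 0 ω} := rfl
  have hU1 : μ (⋃ j, A j ∩ B j) = ∑' j, μ (A j ∩ B j) := by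
    apply measure_iUnion₀
    · intro i j hij
      apply measure_mono_null _ hNnull
      intro ω ⟨h1, h2⟩
      exact hdisj i j hij ⟨h1.1, h2.1⟩
    · exact fun j => ((hAmeas j).inter (hBmeas j)).nullMeasurableSet
  have hU2 : μ (⋃ j, A j) = ∑' j, μ (A j) := by
    apply measure_iUnion₀
    · intro i j hij
      exact measure_mono_null (hdisj i j hij) hNnull
    · exact fun j => (hAmeas j).nullMeasurableSet
  rw [hheight, hU1, hUA, hU2]
  calc ∑' j, μ (A j ∩ B j) = ∑' j, μ (A j) * μ (B 0) := by
        refine tsum_congr (fun j => ?_)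
        rw [hindepAB j, hBeq j]
    _ = μ (B 0) * ∑' j, μ (A j) := by rw [ENNReal.tsum_mul_right, mul_comm]
    _ = μ {ω | k < Y 0 ω} * ∑' j, μ (A j) := by rw [hBIoi]

lemma final_abs (P e e' : ℝ) (h1 : (1-e')^2 ≤ P) (h2 : P ≤ (1+e')^3)
    (h3 : 0 < e') (h4 : e' ≤ 1/2) (h5 : e' ≤ e/8) : |P - 1| ≤ e := by
  have q1 : e'*e' ≤ e'/2 := by
    have := mul_le_mul_of_nonneg_left h4 h3.le; linarith
  have q2 : e'*(e'*e') ≤ e'*(e'/2) := mul_le_mul_of_nonneg_left q1 h3.le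
  have hexp : (1+e')^3 = 1 + 3*e' + 3*(e'*e') + e'*(e'*e') := by ring
  have hexp2 : (1-e')^2 = 1 - 2*e' + e'*e' := by ring
  have hq3 : 0 ≤ e'*e' := mul_nonneg h3.le h3.le
  rw [abs_le]
  constructor <;> linarith

end Stmt12Aux

set_option maxHeartbeats 1000000 in
/-- For the Markov chain on `ℕ` whose excursions from `0` are i.i.d. with distribution
`p_n = c/(n (log n)^2)`, and assuming Nagaev's renewal asymptotic
`P(∃j, Y_1+⋯+Y_j = s) ~ P(Y = s)/P(Y > s)²`, the height `h(X_n)` of the chain at time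
`n` satisfies `P(h(X_n) = k) ~ 1/((log k)·(n−k))` as `k → ∞` and `n − k → ∞`. -/
theorem stmt12 {Ω : Type*} [MeasurableSpace Ω] (μ : Measure Ω) [IsProbabilityMeasure μ]
    (c : ℝ) (hc : 0 < c)
    (Y : ℕ → Ω → ℕ) (hYmeas : ∀ i, Measurable (Y i))
    (hindep : iIndepFun Y μ)
    (hlaw : ∀ i n, (μ (Y i ⁻¹' {n})).toReal = excursionLaw c n)
    (hrenewal : ∀ ε : ℝ, 0 < ε → ∃ C : ℕ, ∀ s : ℕ, C ≤ s →
      |(μ {ω | ∃ j : ℕ, renewalTime Y j ω = s}).toReal -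
          excursionLaw c s / ((μ {ω | s < Y 0 ω}).toReal) ^ 2| ≤
        ε * (excursionLaw c s / ((μ {ω | s < Y 0 ω}).toReal) ^ 2)) :
    ∀ ε : ℝ, 0 < ε → ∃ C : ℕ, ∀ n k : ℕ, k < n → C ≤ k → C ≤ n - k →
      |(μ (heightEq Y n k)).toReal * (Real.log k * ((n : ℝ) - k)) - 1| ≤ ε := by
  intro ε hε
  set ε' : ℝ := min (ε/8) (1/2) with hε'def
  have hε'pos : 0 < ε' := lt_min (by linarith) (by norm_num)
  have hε'half : ε' ≤ 1/2 := min_le_right _ _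
  have hε'8 : ε' ≤ ε/8 := min_le_left _ _
  obtain ⟨C₀, hC₀⟩ := hrenewal ε' hε'pos
  set C : ℕ := max (max C₀ 3) (⌈1/ε'⌉₊ + 3) with hCdef
  refine ⟨C, fun n k hkn hCk hCs => ?_⟩
  set s : ℕ := n - k with hsdef
  have hk3 : 3 ≤ k := le_trans (le_trans (le_max_right _ _) (le_max_left _ _)) hCk
  have hs3 : 3 ≤ s := le_trans (le_trans (le_max_right _ _) (le_max_left _ _)) hCs
  have hkC0 : C₀ ≤ s := le_trans (le_trans (le_max_left _ _) (le_max_left _ _)) hCs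
  have hkinv : 1/ε' ≤ (k:ℝ) := by
    have h1 : (⌈1/ε'⌉₊ : ℕ) ≤ k := le_trans (le_trans (Nat.le_add_right _ 3) (le_max_right _ _)) hCk
    exact le_trans (Nat.le_ceil _) (by exact_mod_cast h1)
  have hsinv : 1/ε' ≤ (s:ℝ) := by
    have h1 : (⌈1/ε'⌉₊ : ℕ) ≤ s := le_trans (le_trans (Nat.le_add_right _ 3) (le_max_right _ _)) hCs
    exact le_trans (Nat.le_ceil _) (by exact_mod_cast h1)
  -- basic reals
  have hkR : (3:ℝ) ≤ (k:ℝ) := by exact_mod_cast hk3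
  have hsR : (3:ℝ) ≤ (s:ℝ) := by exact_mod_cast hs3
  have hkinv' : 1/(k:ℝ) ≤ ε' := by
    rw [div_le_iff₀ (by linarith : (0:ℝ) < (k:ℝ))]
    rw [div_le_iff₀ hε'pos] at hkinv
    linarith
  have hsinv' : 1/(s:ℝ) ≤ ε' := by
    rw [div_le_iff₀ (by linarith : (0:ℝ) < (s:ℝ))]
    rw [div_le_iff₀ hε'pos] at hsinv
    linarith
  set Lk : ℝ := Real.log k with hLkdef
  set Lk' : ℝ := Real.log ((k:ℝ)+1) with hLk'def
  set Ls : ℝ := Real.log s with hLsdef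
  set Ls' : ℝ := Real.log ((s:ℝ)+1) with hLs'def
  have hLk1 : 1 ≤ Lk := by
    rw [hLkdef, Real.le_log_iff_exp_le (by linarith)]
    have := Real.exp_one_lt_d9
    linarith
  have hLs1 : 1 ≤ Ls := by
    rw [hLsdef, Real.le_log_iff_exp_le (by linarith)]
    have := Real.exp_one_lt_d9
    linarith
  have hgapk := Stmt12Aux.log_gap_bounds (k:ℝ) (by linarith)
  have hgaps := Stmt12Aux.log_gap_bounds (s:ℝ) (by linarith)
  have hLk'le : Lk' ≤ (1+ε') * Lk := by
    have h1 : Lk' - Lk ≤ 1/(k:ℝ) := hgapk.2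
    have h2 : ε' * 1 ≤ ε' * Lk := mul_le_mul_of_nonneg_left hLk1 hε'pos.le
    have h3 : (1+ε') * Lk = Lk + ε' * Lk := by ring
    linarith
  have hLs'le : Ls' ≤ (1+ε') * Ls := by
    have h1 : Ls' - Ls ≤ 1/(s:ℝ) := hgaps.2
    have h2 : ε' * 1 ≤ ε' * Ls := mul_le_mul_of_nonneg_left hLs1 hε'pos.le
    have h3 : (1+ε') * Ls = Ls + ε' * Ls := by ring
    linarith
  have hLkle : Lk ≤ Lk' := by
    have := hgapk.1
    have : (0:ℝ) < 1/((k:ℝ)+1) := by positivity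
    linarith [hgapk.1]
  have hLsle : Ls ≤ Ls' := by
    have : (0:ℝ) < 1/((s:ℝ)+1) := by positivity
    linarith [hgaps.1]
  have hLk'pos : 0 < Lk' := by linarith
  have hLs'pos : 0 < Ls' := by linarith
  have hLkpos : (0:ℝ) < Lk := by linarith
  have hLspos : (0:ℝ) < Ls := by linarith
  -- summability and tails
  have hsum := Stmt12Aux.law_summable μ c Y hYmeas hlaw
  set T : ℕ → ℝ := fun t => ∑' m : ℕ, excursionLaw c (t+1+m) with hTdef
  have hTt : ∀ t : ℕ, (μ {ω | t < Y 0 ω}).toReal = T t :=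
    fun t => Stmt12Aux.tail_toReal μ c Y hYmeas hlaw 0 t
  have hTk := Stmt12Aux.tail_bounds c hc.le hsum k (by omega)
  have hTs := Stmt12Aux.tail_bounds c hc.le hsum s (by omega)
  have hTkpos : 0 < T k := lt_of_lt_of_le (by positivity) hTk.1
  have hTspos : 0 < T s := lt_of_lt_of_le (by positivity) hTs.1
  -- the renewal probability
  set R : ℝ := (μ {ω | ∃ j : ℕ, renewalTime Y j ω = s}).toReal with hRdef
  have hRnn : 0 ≤ R := ENNReal.toReal_nonneg
  set r : ℝ := excursionLaw c s / (T s)^2 with hrdef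
  have hps : excursionLaw c s = c / ((s:ℝ) * Ls^2) := by
    rw [excursionLaw, if_pos (by omega)]
  have hrR : |R - r| ≤ ε' * r := by
    have := hC₀ s hkC0
    rwa [hTt s] at this
  have hrRlow : (1-ε') * r ≤ R := by
    have := (abs_le.1 hrR).1
    linarith
  have hrRhigh : R ≤ (1+ε') * r := by
    have := (abs_le.1 hrR).2
    linarith
  -- bounds on r
  have hspos : (0:ℝ) < (s:ℝ) := by linarith
  have hrlow : 1/(c*(s:ℝ)) ≤ r := by
    rw [hrdef, hps]
    have h1 : (T s)^2 ≤ (c/Ls)^2 := by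
      apply pow_le_pow_left₀ hTspos.le hTs.2
    have h2 : c / ((s:ℝ) * Ls^2) / (c/Ls)^2 ≤ c / ((s:ℝ) * Ls^2) / (T s)^2 :=
      div_le_div_of_nonneg_left (by positivity) (by positivity) h1
    have h3 : c / ((s:ℝ) * Ls^2) / (c/Ls)^2 = 1/(c*(s:ℝ)) := by
      field_simp
    exact le_of_eq_of_le h3.symm h2
  have hrhigh : r ≤ Ls'^2/(c*(s:ℝ)*Ls^2) := by
    rw [hrdef, hps]
    have h1 : (c/Ls')^2 ≤ (T s)^2 := by
      apply pow_le_pow_left₀ (by positivity) hTs.1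
    have h2 : c / ((s:ℝ) * Ls^2) / (T s)^2 ≤ c / ((s:ℝ) * Ls^2) / (c/Ls')^2 :=
      div_le_div_of_nonneg_left (by positivity) (by positivity) h1
    have h3 : c / ((s:ℝ) * Ls^2) / (c/Ls')^2 = Ls'^2/(c*(s:ℝ)*Ls^2) := by
      field_simp
    exact le_of_le_of_eq h2 h3
  have hrpos : 0 < r := lt_of_lt_of_le (by positivity) hrlow
  -- factorization
  have hfac : (μ (heightEq Y n k)).toReal = T k * R := by
    rw [Stmt12Aux.height_factor μ c Y hYmeas hindep hlaw n k, ENNReal.toReal_mul, hTt k]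
  have hcast : (n:ℝ) - (k:ℝ) = (s:ℝ) := by
    rw [hsdef]
    push_cast [Nat.cast_sub hkn.le]
    ring
  rw [hfac, hcast]
  set P : ℝ := T k * R * (Lk * (s:ℝ)) with hPdef
  -- bounds on P
  have hPup : P ≤ (1+ε')^3 := by
    have step1 : T k * R ≤ (c/Lk) * ((1+ε') * (Ls'^2/(c*(s:ℝ)*Ls^2))) := by
      apply mul_le_mul hTk.2 (le_trans hrRhigh
        (mul_le_mul_of_nonneg_left hrhigh (by linarith))) hRnn (div_nonneg hc.le hLkpos.le)
    have step2 : P ≤ (c/Lk) * ((1+ε') * (Ls'^2/(c*(s:ℝ)*Ls^2))) * (Lk * (s:ℝ)) := by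
      apply mul_le_mul_of_nonneg_right step1 (by positivity)
    have heq : (c/Lk) * ((1+ε') * (Ls'^2/(c*(s:ℝ)*Ls^2))) * (Lk * (s:ℝ))
        = (1+ε') * (Ls'/Ls)^2 := by
      field_simp
    have hrat : (Ls'/Ls)^2 ≤ (1+ε')^2 := by
      apply pow_le_pow_left₀ (div_nonneg hLs'pos.le hLspos.le)
      rw [div_le_iff₀ hLspos]
      exact hLs'le
    calc P ≤ (1+ε') * (Ls'/Ls)^2 := heq ▸ step2
      _ ≤ (1+ε') * (1+ε')^2 := mul_le_mul_of_nonneg_left hrat (by linarith)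
      _ = (1+ε')^3 := by ring
  have hPlow : (1-ε')^2 ≤ P := by
    have step1 : (c/Lk') * ((1-ε') * (1/(c*(s:ℝ)))) ≤ T k * R := by
      apply mul_le_mul hTk.1 (le_trans
        (mul_le_mul_of_nonneg_left hrlow (by linarith)) hrRlow)
        (mul_nonneg (by linarith) (by positivity)) hTkpos.le
    have step2 : (c/Lk') * ((1-ε') * (1/(c*(s:ℝ)))) * (Lk * (s:ℝ)) ≤ P := by
      apply mul_le_mul_of_nonneg_right step1 (by positivity)
    have heq : (c/Lk') * ((1-ε') * (1/(c*(s:ℝ)))) * (Lk * (s:ℝ)) = (1-ε') * (Lk/Lk') := by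
      field_simp
    have hrat : 1-ε' ≤ Lk/Lk' := by
      rw [le_div_iff₀ hLk'pos]
      have h1 : (1-ε')*Lk' ≤ (1-ε')*((1+ε')*Lk) := mul_le_mul_of_nonneg_left hLk'le (by linarith)
      have h2 : (1-ε')*((1+ε')*Lk) = Lk - ε'^2*Lk := by ring
      have h3 : 0 ≤ ε'^2*Lk := by positivity
      linarith
    calc (1-ε')^2 = (1-ε') * (1-ε') := by ring
      _ ≤ (1-ε') * (Lk/Lk') := mul_le_mul_of_nonneg_left hrat (by linarith)
      _ = (c/Lk') * ((1-ε') * (1/(c*(s:ℝ)))) * (Lk * (s:ℝ)) := heq.symm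
      _ ≤ P := step2
  exact Stmt12Aux.final_abs P ε ε' hPlow hPup hε'pos hε'half hε'8
end

section
/- Suppose (Q_{n,k})_{k<n} are nonnegative numbers with Q_{n,k} ~ 1/((log k)(n−k)) uniformly as k → ∞ and n−k → ∞, and ∑_k Q_{n,k} ≤ 1. Then for any fixed β ∈ (0,1), ∑_{k=⌈n−n^β⌉}^{n−1} Q_{n,k} → β as n → ∞. -/
set_option maxHeartbeats 1000000


open Filter Finset

lemma log_succ_sub_le {x : ℝ} (hx : 1 ≤ x) : Real.log (x + 1) - Real.log x ≤ 1 / x := by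
  have hx0 : (0:ℝ) < x := by linarith
  rw [← Real.log_div (by linarith) (ne_of_gt hx0)]
  have h : (x + 1) / x = 1 + 1 / x := by field_simp
  rw [h]
  have := Real.log_le_sub_one_of_pos (show (0:ℝ) < 1 + 1 / x by positivity)
  linarith

lemma log_succ_sub_ge {x : ℝ} (hx : 0 < x) : 1 / (x + 1) ≤ Real.log (x + 1) - Real.log x := by
  have h1 : (0:ℝ) < x / (x + 1) := by positivity
  have h2 := Real.log_le_sub_one_of_pos h1
  rw [Real.log_div (ne_of_gt hx) (by linarith)] at h2
  have h3 : x / (x + 1) - 1 = -(1 / (x + 1)) := by field_simp; ring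
  rw [h3] at h2
  linarith

lemma sum_inv_ge (a b : ℕ) (ha : 1 ≤ a) (hab : a ≤ b) :
    Real.log b - Real.log a ≤ ∑ j ∈ Finset.Ico a b, (1:ℝ) / j := by
  induction b, hab using Nat.le_induction with
  | base => simp
  | succ b hb ih =>
    rw [Finset.sum_Ico_succ_top hb]
    have h1 : (1:ℝ) ≤ (b:ℝ) := by exact_mod_cast le_trans ha hb
    have := log_succ_sub_le h1
    push_cast
    push_cast at ih
    linarith

lemma sum_inv_le (a b : ℕ) (ha : 1 ≤ a) (hab : a ≤ b) :
    ∑ j ∈ Finset.Ico (a + 1) (b + 1), (1:ℝ) / j ≤ Real.log b - Real.log a := by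
  induction b, hab using Nat.le_induction with
  | base => simp
  | succ b hb ih =>
    rw [Finset.sum_Ico_succ_top (by omega)]
    have h1 : (1:ℝ) ≤ (b:ℝ) := by exact_mod_cast le_trans ha hb
    have := log_succ_sub_ge (show (0:ℝ) < (b:ℝ) by linarith)
    push_cast
    push_cast at ih
    linarith

lemma floor_rpow_tendsto {γ : ℝ} (hγ : 0 < γ) :
    Tendsto (fun n : ℕ => ⌊(n:ℝ) ^ γ⌋₊) atTop atTop :=
  tendsto_nat_floor_atTop.comp ((tendsto_rpow_atTop hγ).comp tendsto_natCast_atTop_atTop)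

lemma rpow_half_eventually {γ : ℝ} (hγ1 : γ < 1) :
    ∀ᶠ n : ℕ in atTop, (n:ℝ) ^ γ ≤ (n:ℝ) / 2 := by
  have h0 : Tendsto (fun x : ℝ => x ^ (-(1-γ))) atTop (nhds 0) :=
    tendsto_rpow_neg_atTop (by linarith)
  have h1 : Tendsto (fun n : ℕ => (n:ℝ) ^ (γ - 1)) atTop (nhds 0) := by
    have := h0.comp tendsto_natCast_atTop_atTop
    simpa [Function.comp_def, neg_sub] using this
  have h2 : ∀ᶠ n : ℕ in atTop, (n:ℝ) ^ (γ - 1) < 1/2 :=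
    h1.eventually_lt_const (by norm_num)
  filter_upwards [h2, eventually_ge_atTop 1] with n hn hn1
  have hn0 : (0:ℝ) < n := by exact_mod_cast hn1
  have key : (n:ℝ) ^ γ = (n:ℝ) ^ (γ - 1) * (n:ℝ) ^ (1:ℝ) := by
    rw [← Real.rpow_add hn0 (γ-1) 1]
    norm_num
  rw [key, Real.rpow_one]
  nlinarith [hn.le, hn0]

lemma window (Q : ℕ → ℕ → ℝ) (hQ0 : ∀ n k, 0 ≤ Q n k) {ε' : ℝ} (hε'0 : 0 < ε') (hε'1 : ε' < 1)
    (C : ℕ) (hC : 2 ≤ C)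
    (hasC : ∀ n k : ℕ, C ≤ k → C ≤ n - k → |Q n k * (Real.log k * ((n : ℝ) - k)) - 1| < ε')
    {γ : ℝ} (hγ0 : 0 < γ) (hγ1 : γ < 1) {δ : ℝ} (hδ : 0 < δ) :
    ∀ᶠ n : ℕ in atTop,
      γ * (1 - ε') - δ ≤ ∑ k ∈ Finset.Ico (n - ⌊(n:ℝ) ^ γ⌋₊) (n - C), Q n k ∧
      ∑ k ∈ Finset.Ico (n - ⌊(n:ℝ) ^ γ⌋₊) (n - C), Q n k ≤ γ * (1 + ε') + δ := by
  set T : ℝ := max ((γ * (1 + ε') + δ) * Real.log 2 / δ) ((1 - ε') * Real.log (C + 1) / δ) with hT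
  have hlogT : Tendsto (fun n : ℕ => Real.log n) atTop atTop :=
    Real.tendsto_log_atTop.comp tendsto_natCast_atTop_atTop
  filter_upwards [rpow_half_eventually hγ1, (floor_rpow_tendsto hγ0).eventually_ge_atTop (C + 1),
    eventually_ge_atTop (4 * C), hlogT.eventually_ge_atTop T] with n h1 h2 h4 hT'
  -- notation
  set m := ⌊(n:ℝ) ^ γ⌋₊ with hm
  have hn8 : (8:ℝ) ≤ (n:ℝ) := by
    have : 8 ≤ n := by omega
    exact_mod_cast this
  have hMle : (m:ℝ) ≤ (n:ℝ) / 2 := le_trans (Nat.floor_le (by positivity)) h1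
  have hmn : m ≤ n := by
    have : (m:ℝ) ≤ (n:ℝ) := by linarith
    exact_mod_cast this
  have hcast : ((n - m : ℕ) : ℝ) = (n:ℝ) - m := by
    rw [Nat.cast_sub hmn]
  have hNM : (n:ℝ) / 2 ≤ (n:ℝ) - m := by linarith
  have hCreal : (C:ℝ) ≤ (n:ℝ) / 4 := by
    have : (4 * C : ℕ) ≤ (n : ℕ) := h4
    have := (Nat.cast_le (α := ℝ)).2 this
    push_cast at this
    linarith
  have hCnm : C ≤ n - m := by
    have : (C:ℝ) ≤ ((n - m : ℕ) : ℝ) := by rw [hcast]; linarith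
    exact_mod_cast this
  have hCm : C + 1 ≤ m := h2
  have hlogn_pos : 0 < Real.log n := Real.log_pos (by linarith)
  have hlogNM_pos : 0 < Real.log ((n:ℝ) - m) := Real.log_pos (by linarith)
  have hlog2 : Real.log ((n:ℝ)/2) = Real.log n - Real.log 2 :=
    Real.log_div (by linarith) (by norm_num)
  have hlogNM_ge : Real.log n - Real.log 2 ≤ Real.log ((n:ℝ) - m) := by
    rw [← hlog2]; exact Real.log_le_log (by linarith) hNM
  have hlogn2_pos : 0 < Real.log n - Real.log 2 := by
    rw [← hlog2]; exact Real.log_pos (by linarith)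
  -- per-term facts
  have hmem : ∀ k ∈ Finset.Ico (n - m) (n - C),
      Q n k ≤ (1 + ε') / Real.log ((n:ℝ) - m) * (1 / ((n:ℝ) - k)) ∧
      (1 - ε') / Real.log n * (1 / ((n:ℝ) - k)) ≤ Q n k := by
    intro k hk
    rw [Finset.mem_Ico] at hk
    obtain ⟨hk1, hk2⟩ := hk
    have hkC : C ≤ k := le_trans hCnm hk1
    have hkn : k < n := by omega
    have hnkC : C ≤ n - k := by omega
    have habs := hasC n k hkC hnkC
    have hKge : (n:ℝ) - m ≤ (k:ℝ) := by
      have := (Nat.cast_le (α := ℝ)).2 hk1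
      rw [hcast] at this; exact this
    have hKlt : (k:ℝ) < (n:ℝ) := by exact_mod_cast hkn
    have hNK : (C:ℝ) ≤ (n:ℝ) - k := by
      have := (Nat.cast_le (α := ℝ)).2 hnkC
      rwa [Nat.cast_sub hkn.le] at this
    have hNKpos : (0:ℝ) < (n:ℝ) - k := by
      have : (2:ℝ) ≤ (C:ℝ) := by exact_mod_cast hC
      linarith
    have hlogk_pos : 0 < Real.log k := Real.log_pos (by linarith)
    have hlogk_le : Real.log k ≤ Real.log n := Real.log_le_log (by linarith) hKlt.le
    have hlogk_ge : Real.log ((n:ℝ) - m) ≤ Real.log k := Real.log_le_log (by linarith) hKge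
    set L := Real.log k * ((n:ℝ) - k) with hL
    have hLpos : 0 < L := mul_pos hlogk_pos hNKpos
    rw [abs_lt] at habs
    obtain ⟨ha1, ha2⟩ := habs
    constructor
    · have hq : Q n k < (1 + ε') / L := by
        rw [lt_div_iff₀ hLpos]; linarith
      have hle : (1 + ε') / L ≤ (1 + ε') / (Real.log ((n:ℝ) - m) * ((n:ℝ) - k)) := by
        apply div_le_div_of_nonneg_left (by linarith) (mul_pos hlogNM_pos hNKpos)
        exact mul_le_mul_of_nonneg_right hlogk_ge hNKpos.le
      have heq : (1 + ε') / (Real.log ((n:ℝ) - m) * ((n:ℝ) - k))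
          = (1 + ε') / Real.log ((n:ℝ) - m) * (1 / ((n:ℝ) - k)) := by
        rw [div_mul_div_comm, mul_one]
      linarith [heq ▸ hle]
    · have hq : (1 - ε') / L < Q n k := by
        rw [div_lt_iff₀ hLpos]; linarith
      have hle : (1 - ε') / (Real.log n * ((n:ℝ) - k)) ≤ (1 - ε') / L := by
        apply div_le_div_of_nonneg_left (by linarith) hLpos
        exact mul_le_mul_of_nonneg_right hlogk_le hNKpos.le
      have heq : (1 - ε') / (Real.log n * ((n:ℝ) - k))
          = (1 - ε') / Real.log n * (1 / ((n:ℝ) - k)) := by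
        rw [div_mul_div_comm, mul_one]
      linarith [heq ▸ hle]
  -- the harmonic sum
  have hreindex : ∑ k ∈ Finset.Ico (n - m) (n - C), (1 / ((n:ℝ) - k))
      = ∑ j ∈ Finset.Ico (C + 1) (m + 1), (1:ℝ) / j := by
    have step1 : ∑ k ∈ Finset.Ico (n - m) (n - C), (1 / ((n:ℝ) - k))
        = ∑ k ∈ Finset.Ico (n - m) (n - C), (fun j : ℕ => (1:ℝ) / j) (n - k) := by
      apply Finset.sum_congr rfl
      intro k hk
      rw [Finset.mem_Ico] at hk
      have hkn : k ≤ n := by omega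
      simp only []
      rw [Nat.cast_sub hkn]
    have hrefl := Finset.sum_Ico_reflect (fun j : ℕ => (1:ℝ) / j) (n - m)
      (show n - C ≤ n + 1 by omega)
    have e1 : n + 1 - (n - C) = C + 1 := by omega
    have e2 : n + 1 - (n - m) = m + 1 := by omega
    rw [e1, e2] at hrefl
    exact step1.trans hrefl
  have Hlow : Real.log ((m:ℝ) + 1) - Real.log ((C:ℝ) + 1)
      ≤ ∑ j ∈ Finset.Ico (C + 1) (m + 1), (1:ℝ) / j := by
    have := sum_inv_ge (C + 1) (m + 1) (by omega) (by omega)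
    push_cast at this
    exact this
  have Hup : ∑ j ∈ Finset.Ico (C + 1) (m + 1), (1:ℝ) / j ≤ Real.log (m:ℝ) - Real.log (C:ℝ) := by
    exact sum_inv_le C m (by omega) (by omega)
  have Hnonneg : (0:ℝ) ≤ ∑ j ∈ Finset.Ico (C + 1) (m + 1), (1:ℝ) / j := by
    apply Finset.sum_nonneg; intro j hj; positivity
  -- log bounds
  have hlogm_le : Real.log (m:ℝ) ≤ γ * Real.log n := by
    have hm0 : (0:ℝ) < (m:ℝ) := by exact_mod_cast (show 0 < m by omega)
    have h1' : Real.log (m:ℝ) ≤ Real.log ((n:ℝ) ^ γ) :=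
      Real.log_le_log hm0 (Nat.floor_le (by positivity))
    rwa [Real.log_rpow (by linarith)] at h1'
  have hlogm1_ge : γ * Real.log n ≤ Real.log ((m:ℝ) + 1) := by
    have h1' : (n:ℝ) ^ γ ≤ (m:ℝ) + 1 := (Nat.lt_floor_add_one _).le
    have := Real.log_le_log (by positivity) h1'
    rwa [Real.log_rpow (by linarith)] at this
  have hlogC_nonneg : 0 ≤ Real.log (C:ℝ) := Real.log_nonneg (by exact_mod_cast hC.trans' (by norm_num))
  -- threshold consequences
  have key1 : (γ * (1 + ε') + δ) * Real.log 2 ≤ δ * Real.log n := by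
    have h5 : (γ * (1 + ε') + δ) * Real.log 2 / δ ≤ Real.log n := le_trans (le_max_left _ _) hT'
    rw [div_le_iff₀ hδ] at h5
    linarith [h5]
  have key2 : (1 - ε') * Real.log ((C:ℝ) + 1) ≤ δ * Real.log n := by
    have h5 : (1 - ε') * Real.log ((C:ℝ) + 1) / δ ≤ Real.log n := by
      have := le_trans (le_max_right _ _) hT'
      push_cast at this ⊢
      exact this
    rw [div_le_iff₀ hδ] at h5
    linarith [h5]
  constructor
  · -- lower bound
    have hsum1 : (1 - ε') / Real.log n * ∑ j ∈ Finset.Ico (C + 1) (m + 1), (1:ℝ) / j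
        ≤ ∑ k ∈ Finset.Ico (n - m) (n - C), Q n k := by
      rw [← hreindex, Finset.mul_sum]
      exact Finset.sum_le_sum fun k hk => (hmem k hk).2
    have hc_nonneg : 0 ≤ (1 - ε') / Real.log n := div_nonneg (by linarith) hlogn_pos.le
    have hsum2 : (1 - ε') / Real.log n * (Real.log ((m:ℝ) + 1) - Real.log ((C:ℝ) + 1))
        ≤ (1 - ε') / Real.log n * ∑ j ∈ Finset.Ico (C + 1) (m + 1), (1:ℝ) / j :=
      mul_le_mul_of_nonneg_left Hlow hc_nonneg
    have hsum3 : (1 - ε') / Real.log n * (γ * Real.log n - Real.log ((C:ℝ) + 1))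
        ≤ (1 - ε') / Real.log n * (Real.log ((m:ℝ) + 1) - Real.log ((C:ℝ) + 1)) :=
      mul_le_mul_of_nonneg_left (by linarith) hc_nonneg
    have hfin : γ * (1 - ε') - δ
        ≤ (1 - ε') / Real.log n * (γ * Real.log n - Real.log ((C:ℝ) + 1)) := by
      rw [div_mul_eq_mul_div, le_div_iff₀ hlogn_pos]
      nlinarith [key2]
    linarith
  · -- upper bound
    have hsum1 : ∑ k ∈ Finset.Ico (n - m) (n - C), Q n k
        ≤ (1 + ε') / Real.log ((n:ℝ) - m) * ∑ j ∈ Finset.Ico (C + 1) (m + 1), (1:ℝ) / j := by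
      rw [← hreindex, Finset.mul_sum]
      exact Finset.sum_le_sum fun k hk => (hmem k hk).1
    have hc_nonneg : 0 ≤ (1 + ε') / Real.log ((n:ℝ) - m) :=
      div_nonneg (by linarith) hlogNM_pos.le
    have hsum2 : (1 + ε') / Real.log ((n:ℝ) - m) * ∑ j ∈ Finset.Ico (C + 1) (m + 1), (1:ℝ) / j
        ≤ (1 + ε') / Real.log ((n:ℝ) - m) * (γ * Real.log n) := by
      apply mul_le_mul_of_nonneg_left _ hc_nonneg
      linarith
    have hsum3 : (1 + ε') / Real.log ((n:ℝ) - m) * (γ * Real.log n)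
        ≤ (1 + ε') / (Real.log n - Real.log 2) * (γ * Real.log n) := by
      apply mul_le_mul_of_nonneg_right _ (by positivity)
      exact div_le_div_of_nonneg_left (by linarith) hlogn2_pos hlogNM_ge
    have hfin : (1 + ε') / (Real.log n - Real.log 2) * (γ * Real.log n)
        ≤ γ * (1 + ε') + δ := by
      rw [div_mul_eq_mul_div, div_le_iff₀ hlogn2_pos]
      nlinarith [key1]
    linarith


/-- If nonnegative numbers `Q_{n,k}` satisfy `Q_{n,k} ~ 1/((log k)(n−k))` uniformly as
`k → ∞` and `n − k → ∞`, and `∑_k Q_{n,k} ≤ 1`, then for fixed `β ∈ (0,1)` the sum of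
`Q_{n,k}` over `k ∈ [n − n^β, n)` tends to `β`. -/
theorem stmt15 (Q : ℕ → ℕ → ℝ) (hQ0 : ∀ n k, 0 ≤ Q n k)
    (hsum : ∀ n, ∑ k ∈ Finset.range n, Q n k ≤ 1)
    (hasymp : ∀ ε : ℝ, 0 < ε → ∃ C : ℕ, ∀ n k : ℕ, C ≤ k → C ≤ n - k →
      |Q n k * (Real.log k * ((n : ℝ) - k)) - 1| < ε)
    (β : ℝ) (hβ : β ∈ Set.Ioo (0 : ℝ) 1) :
    Tendsto (fun n : ℕ => ∑ k ∈ Finset.Ico (n - ⌊(n : ℝ) ^ β⌋₊) n, Q n k)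
      atTop (nhds β) := by
  obtain ⟨hβ0, hβ1⟩ := hβ
  rw [Metric.tendsto_atTop]
  intro ε hε
  set ε' : ℝ := min (ε / 8) (1 / 2) with hε'def
  have hε'0 : 0 < ε' := lt_min (by linarith) (by norm_num)
  have hε'half : ε' ≤ 1 / 2 := min_le_right _ _
  have hε'1 : ε' < 1 := lt_of_le_of_lt hε'half (by norm_num)
  have hε'ε : ε' ≤ ε / 8 := min_le_left _ _
  obtain ⟨C₀, hC₀⟩ := hasymp ε' hε'0
  set C : ℕ := max C₀ 2 with hCdef
  have hC : 2 ≤ C := le_max_right _ _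
  have hasC : ∀ n k : ℕ, C ≤ k → C ≤ n - k →
      |Q n k * (Real.log k * ((n : ℝ) - k)) - 1| < ε' := fun n k hk hnk =>
    hC₀ n k (le_trans (le_max_left _ _) hk) (le_trans (le_max_left _ _) hnk)
  set γ : ℝ := 1 - ε' with hγdef
  have hγ0 : 0 < γ := by simp only [hγdef]; linarith
  have hγ1 : γ < 1 := by simp only [hγdef]; linarith
  have hδ : (0:ℝ) < ε / 8 := by linarith
  have W1 := window Q hQ0 hε'0 hε'1 C hC hasC hβ0 hβ1 hδ
  have W2 := window Q hQ0 hε'0 hε'1 C hC hasC hγ0 hγ1 hδ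
  have Eβ : ∀ᶠ n : ℕ in atTop, C + 1 ≤ ⌊(n:ℝ) ^ β⌋₊ :=
    (floor_rpow_tendsto hβ0).eventually_ge_atTop (C + 1)
  have Eγ : ∀ᶠ n : ℕ in atTop, C + 1 ≤ ⌊(n:ℝ) ^ γ⌋₊ :=
    (floor_rpow_tendsto hγ0).eventually_ge_atTop (C + 1)
  have hev : ∀ᶠ n : ℕ in atTop,
      dist (∑ k ∈ Finset.Ico (n - ⌊(n : ℝ) ^ β⌋₊) n, Q n k) β < ε := by
    filter_upwards [W1, W2, Eβ, Eγ, eventually_ge_atTop (C + 1)] with n h1 h2 h3 h4 h5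
    obtain ⟨l1, u1⟩ := h1
    obtain ⟨l2, _⟩ := h2
    set mβ := ⌊(n:ℝ) ^ β⌋₊
    set mγ := ⌊(n:ℝ) ^ γ⌋₊
    -- split the target sum
    have hsplit : ∑ k ∈ Finset.Ico (n - mβ) n, Q n k
        = ∑ k ∈ Finset.Ico (n - mβ) (n - C), Q n k + ∑ k ∈ Finset.Ico (n - C) n, Q n k := by
      rw [Finset.sum_Ico_consecutive]
      · omega
      · omega
    -- tail bound
    have htail0 : 0 ≤ ∑ k ∈ Finset.Ico (n - C) n, Q n k :=
      Finset.sum_nonneg fun k _ => hQ0 n k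
    have hbulk : ∑ k ∈ Finset.Ico (n - mγ) (n - C), Q n k
        + ∑ k ∈ Finset.Ico (n - C) n, Q n k ≤ 1 := by
      rw [Finset.sum_Ico_consecutive _ (by omega) (by omega)]
      refine le_trans ?_ (hsum n)
      apply Finset.sum_le_sum_of_subset_of_nonneg
      · intro k hk
        rw [Finset.mem_Ico] at hk
        rw [Finset.mem_range]
        exact hk.2
      · intro k _ _
        exact hQ0 n k
    have htail : ∑ k ∈ Finset.Ico (n - C) n, Q n k ≤ 1 - (γ * (1 - ε') - ε / 8) := by
      linarith
    rw [Real.dist_eq, abs_lt, hsplit]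
    constructor
    · nlinarith [hβ1, hε'0, hε'ε]
    · have hγε : 1 - γ * (1 - ε') ≤ 2 * ε' := by
        simp only [hγdef]
        nlinarith [hε'0]
      nlinarith [hβ1.le, hε'0, hε'ε, hβ0]
  exact eventually_atTop.mp hev
end

section
/- Let T be a non-singular map of a σ-finite measure space (X, m) with transfer operator T̂ (the predual of composition by T on L¹(m), characterized by ∫ (T̂ f)·g dm = ∫ f·(g∘T) dm for f ∈ L¹(m) and bounded measurable g). If T is conservative, then for every nonnegative f ∈ L¹(m), ∑_{n=0}^∞ T̂^n f(x) = ∞ for m-almost every x with f(x) > 0. -/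
open MeasureTheory Filter

/-- If `T` is a conservative non-singular map of a σ-finite measure space and `T̂` is
its transfer operator (characterized by `∫ (T̂ u)·v dm = ∫ u·(v∘T) dm` for integrable
`u` and bounded measurable `v`), then for every nonnegative integrable `f`,
`∑_n T̂^n f(x) = ∞` for `m`-almost every `x` with `f(x) > 0`. -/
theorem stmt19 {X : Type*} [MeasurableSpace X] (m : Measure X) [SigmaFinite m]
    (T : X → X) (hT : Conservative T m)
    (That : (X → ℝ) → (X → ℝ))
    (hmap : ∀ u : X → ℝ, Integrable u m → Integrable (That u) m)
    (hdual : ∀ u : X → ℝ, Integrable u m →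
      ∀ v : X → ℝ, Measurable v → (∃ K : ℝ, ∀ x, |v x| ≤ K) →
        ∫ x, That u x * v x ∂m = ∫ x, u x * v (T x) ∂m) :
    ∀ f : X → ℝ, Integrable f m → (∀ x, 0 ≤ f x) →
      ∀ᵐ x ∂m, 0 < f x →
        Tendsto (fun N : ℕ => ∑ n ∈ Finset.range N, (That^[n] f) x) atTop atTop := by
  intro f hf hf0
  have hTm : Measurable T := hT.toQuasiMeasurePreserving.measurable
  -- products of integrable and bounded measurable functions are integrable
  have hmul : ∀ u : X → ℝ, Integrable u m → ∀ v : X → ℝ, Measurable v →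
      ∀ K : ℝ, (∀ x, |v x| ≤ K) → Integrable (fun x => u x * v x) m := by
    intro u hu v hv K hK
    have := hu.bdd_mul hv.aestronglyMeasurable
      (c := K) (Eventually.of_forall fun x => by simpa [Real.norm_eq_abs] using hK x)
    simpa [mul_comm] using this
  -- the iterates of f under That
  set g : ℕ → X → ℝ := fun n => That^[n] f with hgdef
  have hgsucc : ∀ n, g (n + 1) = That (g n) := fun n => Function.iterate_succ_apply' That n f
  have hgint : ∀ n, Integrable (g n) m := by
    intro n
    induction n with
    | zero => simpa [g] using hf
    | succ n ih => rw [hgsucc n]; exact hmap _ ih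
  -- positivity of the transfer operator
  have hpos : ∀ u : X → ℝ, Integrable u m → 0 ≤ᵐ[m] u → 0 ≤ᵐ[m] That u := by
    intro u hu hu0
    refine ae_nonneg_of_forall_setIntegral_nonneg (hmap u hu) ?_
    intro s hs _
    have hv : Measurable (s.indicator (fun _ => (1 : ℝ))) := measurable_const.indicator hs
    have hb : ∀ x, |s.indicator (fun _ => (1 : ℝ)) x| ≤ 1 := by
      intro x; by_cases h : x ∈ s <;> simp [Set.indicator_apply, h]
    have h1 : ∫ x in s, That u x ∂m = ∫ x, That u x * s.indicator (fun _ => 1) x ∂m := by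
      rw [← integral_indicator hs]
      congr 1; ext x; by_cases h : x ∈ s <;> simp [Set.indicator_apply, h]
    rw [h1, hdual u hu _ hv ⟨1, hb⟩]
    apply integral_nonneg_of_ae
    filter_upwards [hu0] with x hx
    have hx' : 0 ≤ u x := hx
    by_cases h : T x ∈ s <;> simp [Set.indicator_apply, h, hx']
  have hg0 : ∀ n, 0 ≤ᵐ[m] g n := by
    intro n
    induction n with
    | zero => exact Eventually.of_forall (by simpa [g] using hf0)
    | succ n ih => rw [hgsucc n]; exact hpos _ (hgint n) ih
  -- iterated duality identity
  have hdual_n : ∀ n, ∀ v : X → ℝ, Measurable v → ∀ K : ℝ, (∀ x, |v x| ≤ K) →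
      ∫ x, g n x * v x ∂m = ∫ x, f x * v (T^[n] x) ∂m := by
    intro n
    induction n with
    | zero => intro v hv K hK; simp [g]
    | succ n ih =>
      intro v hv K hK
      have h1 : ∫ x, g (n + 1) x * v x ∂m = ∫ x, g n x * v (T x) ∂m := by
        rw [hgsucc n]; exact hdual _ (hgint n) v hv ⟨K, hK⟩
      rw [h1, ih (fun x => v (T x)) (hv.comp hTm) K (fun x => hK (T x))]
      congr 1; ext x
      rw [Function.iterate_succ_apply' T n x]
  -- the key summed duality identity
  have hsum : ∀ (N : ℕ) (v : X → ℝ), Measurable v → ∀ K : ℝ, (∀ x, |v x| ≤ K) →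
      ∫ x, (∑ n ∈ Finset.range N, g n x) * v x ∂m
        = ∫ x, f x * (∑ n ∈ Finset.range N, v (T^[n] x)) ∂m := by
    intro N v hv K hK
    have hL : ∫ x, (∑ n ∈ Finset.range N, g n x) * v x ∂m
        = ∑ n ∈ Finset.range N, ∫ x, g n x * v x ∂m := by
      simp_rw [Finset.sum_mul]
      exact integral_finset_sum _ fun n _ => hmul _ (hgint n) v hv K hK
    have hR : ∫ x, f x * (∑ n ∈ Finset.range N, v (T^[n] x)) ∂m
        = ∑ n ∈ Finset.range N, ∫ x, f x * v (T^[n] x) ∂m := by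
      simp_rw [Finset.mul_sum]
      exact integral_finset_sum _ fun n _ =>
        hmul _ hf _ (hv.comp (hTm.iterate n)) K (fun x => hK _)
    rw [hL, hR]
    exact Finset.sum_congr rfl fun n _ => hdual_n n v hv K hK
  -- measurable pointwise-nonnegative versions
  set f' : X → ℝ := hf.1.mk f with hf'def
  have hf'm : Measurable f' := hf.1.stronglyMeasurable_mk.measurable
  have hff' : f =ᵐ[m] f' := hf.1.ae_eq_mk
  set g' : ℕ → X → ℝ := fun n x => max ((hgint n).1.mk (g n) x) 0 with hg'def
  have hg'm : ∀ n, Measurable (g' n) := fun n =>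
    ((hgint n).1.stronglyMeasurable_mk.measurable).max measurable_const
  have hgg' : ∀ n, g n =ᵐ[m] g' n := by
    intro n
    filter_upwards [(hgint n).1.ae_eq_mk, hg0 n] with x h1 h2
    have h2' : 0 ≤ g n x := h2
    simp [g', ← h1, max_eq_left h2']
  have hg'0 : ∀ n x, 0 ≤ g' n x := fun n x => le_max_right _ _
  set S : ℕ → X → ℝ := fun N x => ∑ n ∈ Finset.range N, g' n x with hSdef
  have hSm : ∀ N, Measurable (S N) := fun N => Finset.measurable_sum _ fun n _ => hg'm n
  have hSmono : ∀ x, Monotone fun N => S N x := by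
    intro x
    apply monotone_nat_of_le_succ
    intro N
    simp only [S, Finset.sum_range_succ]
    exact le_add_of_nonneg_right (hg'0 N x)
  have hSS : ∀ N, (fun x => ∑ n ∈ Finset.range N, g n x) =ᵐ[m] S N := by
    intro N
    have : ∀ᵐ x ∂m, ∀ n, g n x = g' n x := ae_all_iff.2 hgg'
    filter_upwards [this] with x hx
    exact Finset.sum_congr rfl fun n _ => hx n
  -- the bad sets
  set B : ℕ → ℕ → Set X := fun k M => {x | ((k : ℝ) + 1)⁻¹ ≤ f' x ∧ ∀ N, S N x ≤ M}
    with hBdef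
  have hBmeas : ∀ k M, MeasurableSet (B k M) := by
    intro k M
    have : B k M = {x | ((k : ℝ) + 1)⁻¹ ≤ f' x} ∩ ⋂ N, {x | S N x ≤ (M : ℝ)} := by
      ext x; simp [B, Set.mem_iInter]
    rw [this]
    exact (measurableSet_le measurable_const hf'm).inter
      (MeasurableSet.iInter fun N => measurableSet_le (hSm N) measurable_const)
  have hBfin : ∀ k M, m (B k M) < ⊤ := by
    intro k M
    have hf'int : Integrable f' m := hf.congr hff'
    refine lt_of_le_of_lt (measure_mono ?_) (hf'int.measure_ge_lt_top (ε := ((k : ℝ) + 1)⁻¹)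
      (by positivity))
    intro x hx
    exact hx.1
  -- the bad sets are null
  have hBnull : ∀ k M, m (B k M) = 0 := by
    intro k M
    by_contra hB0
    set ε : ℝ := ((k : ℝ) + 1)⁻¹ with hεdef
    have hε : 0 < ε := by positivity
    set A : Set X := B k M with hAdef
    have hAm : MeasurableSet A := hBmeas k M
    have hAfin : m A < ⊤ := hBfin k M
    -- indicator counting functions
    set v : X → ℝ := A.indicator (fun _ => (1 : ℝ)) with hvdef
    have hvm : Measurable v := measurable_const.indicator hAm
    have hvb : ∀ x, |v x| ≤ 1 := by
      intro x; by_cases h : x ∈ A <;> simp [v, Set.indicator_apply, h]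
    have hv0 : ∀ x, 0 ≤ v x := by
      intro x; by_cases h : x ∈ A <;> simp [v, Set.indicator_apply, h]
    set c : ℕ → X → ℝ := fun N x => ∑ n ∈ Finset.range N, v (T^[n] x) with hcdef
    have hcm : ∀ N, Measurable (c N) :=
      fun N => Finset.measurable_sum _ fun n _ => hvm.comp (hTm.iterate n)
    have hc0 : ∀ N x, 0 ≤ c N x := fun N x => Finset.sum_nonneg fun n _ => hv0 _
    have hcb : ∀ N x, |c N x| ≤ N := by
      intro N x
      rw [abs_of_nonneg (hc0 N x)]
      calc c N x ≤ ∑ n ∈ Finset.range N, 1 := Finset.sum_le_sum fun n _ => by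
            have := hvb (T^[n] x); rw [abs_le] at this; exact this.2
        _ = N := by simp
    -- key identity
    have key : ∀ N, ∫ x in A, S N x ∂m = ∫ x, f x * c N x ∂m := by
      intro N
      have h1 : ∫ x in A, S N x ∂m
          = ∫ x, (∑ n ∈ Finset.range N, g n x) * v x ∂m := by
        rw [← integral_indicator hAm]
        apply integral_congr_ae
        filter_upwards [hSS N] with x hx
        by_cases h : x ∈ A <;> simp [v, Set.indicator_apply, h, hx]
      rw [h1, hsum N v hvm 1 hvb]
    -- upper bound
    have hupper : ∀ N, ∫ x in A, S N x ∂m ≤ M * (m A).toReal := by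
      intro N
      have hnorm : ∀ x ∈ A, ‖S N x‖ ≤ (M : ℝ) := by
        intro x hx
        rw [Real.norm_eq_abs, abs_of_nonneg (Finset.sum_nonneg fun n _ => hg'0 n x)]
        exact hx.2 N
      calc ∫ x in A, S N x ∂m ≤ ‖∫ x in A, S N x ∂m‖ := le_abs_self _
        _ ≤ M * (m A).toReal := norm_setIntegral_le_of_norm_le_const hAfin hnorm
    -- recurrence: a.e. point of A has unbounded counting function
    have hrec : ∀ᵐ x ∂m, x ∈ A → ∀ j : ℕ, ∃ N, (j : ℝ) ≤ c N x := by
      filter_upwards [hT.ae_mem_imp_frequently_image_mem hAm.nullMeasurableSet] with x hx hxA j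
      induction j with
      | zero => exact ⟨0, by simp [c]⟩
      | succ j ih =>
        obtain ⟨N, hN⟩ := ih
        obtain ⟨n, hnN, hn⟩ := (frequently_atTop.1 (hx hxA)) N
        refine ⟨n + 1, ?_⟩
        have hsub : Finset.range N ∪ {n} ⊆ Finset.range (n + 1) := by
          intro i hi
          simp only [Finset.mem_union, Finset.mem_range, Finset.mem_singleton] at hi ⊢
          rcases hi with hi | hi
          · omega
          · omega
        have hdisj : Disjoint (Finset.range N) ({n} : Finset ℕ) := by
          simp [Finset.disjoint_singleton_right, hnN]
        have : c N x + v (T^[n] x) ≤ c (n + 1) x := by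
          have := Finset.sum_le_sum_of_subset_of_nonneg hsub
            (f := fun i => v (T^[i] x)) (fun i _ _ => hv0 _)
          rwa [Finset.sum_union hdisj, Finset.sum_singleton] at this
        have hvn : v (T^[n] x) = 1 := by simp [v, Set.indicator_apply, hn]
        push_cast
        rw [hvn] at this
        linarith
    -- the increasing family of sets where the counting function is large
    obtain ⟨j, hj⟩ := exists_nat_gt (2 * M / ε)
    set D : ℕ → Set X := fun N => A ∩ {x | (j : ℝ) ≤ c N x} with hDdef
    have hDm : ∀ N, MeasurableSet (D N) :=
      fun N => hAm.inter (measurableSet_le measurable_const (hcm N))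
    have hcmono : ∀ x, Monotone fun N => c N x := by
      intro x
      apply monotone_nat_of_le_succ
      intro N
      simp only [c, Finset.sum_range_succ]
      exact le_add_of_nonneg_right (hv0 _)
    have hDmono : Monotone D := by
      intro N N' hNN' x hx
      exact ⟨hx.1, le_trans hx.2 (hcmono x hNN')⟩
    have hDU : m (⋃ N, D N) = m A := by
      have hsub : (⋃ N, D N) ⊆ A := by
        intro x hx
        obtain ⟨N, hN⟩ := Set.mem_iUnion.1 hx
        exact hN.1
      have hnull : m (A \ ⋃ N, D N) = 0 := by
        rw [measure_eq_zero_iff_ae_notMem]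
        filter_upwards [hrec] with x hx
        intro hmem
        obtain ⟨hxA, hxn⟩ := hmem
        obtain ⟨N, hN⟩ := hx hxA j
        exact hxn (Set.mem_iUnion.2 ⟨N, hxA, hN⟩)
      refine le_antisymm (measure_mono hsub) ?_
      calc m A ≤ m ((⋃ N, D N) ∪ (A \ ⋃ N, D N)) :=
            measure_mono fun x hx =>
              (em (x ∈ ⋃ N, D N)).elim Or.inl fun h => Or.inr ⟨hx, h⟩
        _ ≤ m (⋃ N, D N) + m (A \ ⋃ N, D N) := measure_union_le _ _
        _ = m (⋃ N, D N) := by rw [hnull, add_zero]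
    have htend : Tendsto (fun N => m (D N)) atTop (nhds (m A)) := by
      rw [← hDU]
      exact tendsto_measure_iUnion_atTop hDmono
    have hhalf : m A / 2 < m A := ENNReal.half_lt_self hB0 hAfin.ne
    obtain ⟨N, hN⟩ := (htend.eventually (eventually_gt_nhds hhalf)).exists
    -- lower bound on the integral
    have hDfin : m (D N) < ⊤ := lt_of_le_of_lt (measure_mono Set.inter_subset_left) hAfin
    have hfc_int : Integrable (fun x => f x * c N x) m := hmul _ hf _ (hcm N) N (hcb N)
    have hfc0 : ∀ x, 0 ≤ f x * c N x := fun x => mul_nonneg (hf0 x) (hc0 N x)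
    have hlow1 : ∫ x in D N, f x * c N x ∂m ≤ ∫ x, f x * c N x ∂m :=
      setIntegral_le_integral hfc_int (Eventually.of_forall hfc0)
    have hlow2 : ε * j * (m (D N)).toReal ≤ ∫ x in D N, f x * c N x ∂m := by
      have hconst : ∫ x in D N, (fun _ => ε * j) x ∂m = ε * j * (m (D N)).toReal := by
        rw [setIntegral_const]; ring_nf; rfl
      rw [← hconst]
      refine setIntegral_mono_on_ae (integrableOn_const hDfin.ne)
        hfc_int.integrableOn (hDm N) ?_
      filter_upwards [hff'] with x hfx hxD
      have h1 : ε ≤ f x := by rw [hfx]; exact hxD.1.1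
      have h2 : (j : ℝ) ≤ c N x := hxD.2
      exact mul_le_mul h1 h2 (Nat.cast_nonneg j) (le_trans hε.le h1)
    -- combine
    have hchain : ε * j * (m (D N)).toReal ≤ M * (m A).toReal := by
      calc ε * j * (m (D N)).toReal ≤ ∫ x in D N, f x * c N x ∂m := hlow2
        _ ≤ ∫ x, f x * c N x ∂m := hlow1
        _ = ∫ x in A, S N x ∂m := (key N).symm
        _ ≤ M * (m A).toReal := hupper N
    have hDhalf : (m A).toReal / 2 ≤ (m (D N)).toReal := by
      have h1 : (m A / 2).toReal ≤ (m (D N)).toReal :=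
        (ENNReal.toReal_le_toReal (ENNReal.div_lt_top hAfin.ne (by norm_num)).ne hDfin.ne).2 hN.le
      simpa [ENNReal.toReal_div] using h1
    have hApos : 0 < (m A).toReal := ENNReal.toReal_pos hB0 hAfin.ne
    have hjj : 2 * (M : ℝ) < ε * j := by
      rw [div_lt_iff₀ hε] at hj
      linarith
    have hεj : 0 ≤ ε * (j : ℝ) := mul_nonneg hε.le (Nat.cast_nonneg j)
    have hDN0 : 0 ≤ (m (D N)).toReal := ENNReal.toReal_nonneg
    nlinarith [mul_le_mul_of_nonneg_left hDhalf hεj]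
  -- conclusion
  have hall : ∀ᵐ x ∂m, ∀ n, g n x = g' n x := ae_all_iff.2 hgg'
  have hBae : ∀ᵐ x ∂m, ∀ k M : ℕ, x ∉ B k M := by
    rw [ae_all_iff]
    intro k
    rw [ae_all_iff]
    intro M
    exact (measure_eq_zero_iff_ae_notMem.1 (hBnull k M))
  filter_upwards [hall, hff', hBae] with x hx hfx hB hfpos
  have heq : (fun N : ℕ => ∑ n ∈ Finset.range N, (That^[n] f) x) = fun N => S N x := by
    funext N
    exact Finset.sum_congr rfl fun n _ => hx n
  rw [heq]
  -- choose k with (k+1)⁻¹ ≤ f' x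
  have hf'pos : 0 < f' x := by rw [← hfx]; exact hfpos
  obtain ⟨k, hk⟩ := exists_nat_gt (f' x)⁻¹
  have hkx : ((k : ℝ) + 1)⁻¹ ≤ f' x := by
    rw [inv_le_comm₀ (by positivity) hf'pos]
    linarith
  apply tendsto_atTop_atTop_of_monotone (hSmono x)
  intro b
  obtain ⟨M, hM⟩ := exists_nat_ge b
  have := hB k M
  simp only [B, Set.mem_setOf_eq, not_and, not_forall, not_le] at this
  obtain ⟨N, hN⟩ := this hkx
  exact ⟨N, le_of_lt (lt_of_le_of_lt hM hN)⟩
end
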